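/- arXiv:2503.10477 — 4 statements merged into one kernel-verified Lean document; each statement's English description precedes it below -/
import Mathlib

section
/- In the staircase case ν = (NE)^n, the ν-trees are in bijection with binary trees with n internal nodes; in particular the number of ν-trees equals the n-th Catalan number. -/
open scoped Classical

/-- Number of east steps (`false`) among the first `k` steps of the lattice path `ν`
(`true` = north step N, `false` = east step E). -/
def ecount (ν : List Bool) (k : ℕ) : ℕ := (ν.take k).count false

/-- Number of north steps (`true`) among the first `k` steps of `ν`. -/
def ncount (ν : List Bool) (k : ℕ) : ℕ := (ν.take k).count true

/-- The set `A_ν` of lattice points weakly above `ν` inside the smallest rectangle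
containing `ν` (the lattice points of the Ferrers diagram `F_ν`). -/
def Anu (ν : List Bool) : Set (ℤ × ℤ) :=
  {p | ∃ k ≤ ν.length, p.1 = (ecount ν k : ℤ) ∧ (ncount ν k : ℤ) ≤ p.2 ∧ p.2 ≤ (ν.count true : ℤ)}

/-- `p` is strictly southwest of `q`. -/
def strictSW (p q : ℤ × ℤ) : Prop := p.1 < q.1 ∧ p.2 < q.2

/-- The lattice points of the smallest axis-parallel rectangle containing `p` and `q`. -/
def rectPts (p q : ℤ × ℤ) : Set (ℤ × ℤ) :=
  {z | min p.1 q.1 ≤ z.1 ∧ z.1 ≤ max p.1 q.1 ∧ min p.2 q.2 ≤ z.2 ∧ z.2 ≤ max p.2 q.2}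

/-- `p` and `q` are ν-incompatible: one is strictly southwest (equivalently, the other is
strictly northeast) of the other and the rectangle they span lies inside `F_ν`. -/
def NuIncompatible (ν : List Bool) (p q : ℤ × ℤ) : Prop :=
  (strictSW p q ∨ strictSW q p) ∧ rectPts p q ⊆ Anu ν

/-- `p` and `q` are ν-compatible. -/
def NuCompatible (ν : List Bool) (p q : ℤ × ℤ) : Prop := ¬ NuIncompatible ν p q

/-- A ν-tree: a maximal collection of pairwise ν-compatible elements of `A_ν`. -/
def IsNuTree (ν : List Bool) (T : Set (ℤ × ℤ)) : Prop :=
  T ⊆ Anu ν ∧ (∀ p ∈ T, ∀ q ∈ T, NuCompatible ν p q) ∧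
    ∀ T', T ⊆ T' → T' ⊆ Anu ν → (∀ p ∈ T', ∀ q ∈ T', NuCompatible ν p q) → T' = T

namespace NuStaircase

/-! ### The staircase path -/

lemma stair_succ (n : ℕ) :
    List.flatten (List.replicate (n+1) [true, false])
      = true :: false :: List.flatten (List.replicate n [true, false]) := by
  simp [List.replicate_succ]

lemma stair_length (n : ℕ) :
    (List.flatten (List.replicate n [true, false])).length = 2 * n := by
  induction n with
  | zero => simp
  | succ n ih => rw [stair_succ]; simp [ih]; omega

lemma stair_count_true (n : ℕ) :
    (List.flatten (List.replicate n [true, false])).count true = n := by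
  induction n with
  | zero => simp
  | succ n ih => rw [stair_succ]; simp [List.count_cons, ih]

lemma stair_counts (n k : ℕ) :
    ecount (List.flatten (List.replicate n [true, false])) k = min (k/2) n ∧
    ncount (List.flatten (List.replicate n [true, false])) k = min ((k+1)/2) n := by
  induction n generalizing k with
  | zero => simp [ecount, ncount]
  | succ n ih =>
    rw [stair_succ]
    match k with
    | 0 => simp [ecount, ncount]
    | 1 => simp [ecount, ncount]
    | (k+2) =>
      have h := ih k
      simp only [ecount, ncount, List.take_succ_cons, List.count_cons] at h ⊢
      simp at h ⊢
      omega

/-- The triangle of lattice points. -/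
def Delta (a b : ℤ) : Set (ℤ × ℤ) := {p | a ≤ p.1 ∧ p.1 ≤ p.2 ∧ p.2 ≤ b}

lemma mem_Anu_stair (n : ℕ) (p : ℤ × ℤ) :
    p ∈ Anu (List.flatten (List.replicate n [true, false])) ↔ p ∈ Delta 0 n := by
  constructor
  · rintro ⟨k, hk, h1, h2, h3⟩
    rw [stair_length] at hk
    rw [(stair_counts n k).1] at h1
    rw [(stair_counts n k).2] at h2
    rw [stair_count_true] at h3
    refine ⟨?_, ?_, h3⟩ <;> [skip; skip] <;>
    · rw [h1] at *
      push_cast at *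
      omega
  · rintro ⟨h0, h1, h2⟩
    refine ⟨2 * p.1.toNat, ?_, ?_, ?_, ?_⟩
    · rw [stair_length]; omega
    · rw [(stair_counts n _).1]; push_cast; omega
    · rw [(stair_counts n _).2]; push_cast; omega
    · rw [stair_count_true]; exact h2

/-! ### Crossing / noncrossing intervals -/

def cross (p q : ℤ × ℤ) : Prop := p.1 < q.1 ∧ q.1 ≤ p.2 ∧ p.2 < q.2

def ncr (p q : ℤ × ℤ) : Prop := ¬ cross p q ∧ ¬ cross q p

def MaxCompat (a b : ℤ) (T : Set (ℤ × ℤ)) : Prop :=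
  T ⊆ Delta a b ∧ (∀ p ∈ T, ∀ q ∈ T, ncr p q) ∧
    ∀ p ∈ Delta a b, (∀ q ∈ T, ncr p q) → p ∈ T

lemma rectPts_comm (p q : ℤ × ℤ) : rectPts p q = rectPts q p := by
  ext z
  constructor <;> rintro ⟨a, b, c, d⟩ <;>
    exact ⟨by rwa [min_comm], by rwa [max_comm], by rwa [min_comm], by rwa [max_comm]⟩

lemma nuIncompatible_symm {ν : List Bool} {p q : ℤ × ℤ} (h : NuIncompatible ν p q) :
    NuIncompatible ν q p := ⟨h.1.symm, by rw [rectPts_comm]; exact h.2⟩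

lemma nuCompatible_symm {ν : List Bool} {p q : ℤ × ℤ} (h : NuCompatible ν p q) :
    NuCompatible ν q p := fun h' => h (nuIncompatible_symm h')

lemma nuCompatible_self (ν : List Bool) (p : ℤ × ℤ) : NuCompatible ν p p := by
  rintro ⟨h | h, -⟩ <;> exact absurd h.1 (by omega)

/-- If `p` is strictly SW of `q` and their rectangle is in `Anu`, then they cross. -/
lemma cross_of_incompat (n : ℕ) (p q : ℤ × ℤ)
    (h : NuIncompatible (List.flatten (List.replicate n [true, false])) p q) :
    cross p q ∨ cross q p := by
  obtain ⟨hsw, hrect⟩ := h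
  rcases hsw with hsw | hsw
  · left
    have hc : (q.1, p.2) ∈ rectPts p q := by
      constructor
      · exact le_trans (min_le_left _ _) hsw.1.le
      · exact ⟨le_max_right _ _, min_le_left _ _, le_trans hsw.2.le (le_max_right _ _)⟩
    have := (mem_Anu_stair n _).1 (hrect hc)
    exact ⟨hsw.1, this.2.1, hsw.2⟩
  · right
    have hc : (p.1, q.2) ∈ rectPts p q := by
      constructor
      · exact le_trans (min_le_right _ _) hsw.1.le
      · exact ⟨le_max_left _ _, min_le_right _ _, le_trans hsw.2.le (le_max_left _ _)⟩
    have := (mem_Anu_stair n _).1 (hrect hc)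
    exact ⟨hsw.1, this.2.1, hsw.2⟩

/-- Conversely: crossing points inside the triangle are incompatible. -/
lemma incompat_of_cross (n : ℕ) (p q : ℤ × ℤ) (hp : p ∈ Delta 0 n) (hq : q ∈ Delta 0 n)
    (h : cross p q) :
    NuIncompatible (List.flatten (List.replicate n [true, false])) p q := by
  obtain ⟨h1, h2, h3⟩ := h
  refine ⟨Or.inl ⟨h1, h3⟩, ?_⟩
  intro z hz
  obtain ⟨hz1, hz2, hz3, hz4⟩ := hz
  rw [min_eq_left h1.le] at hz1
  rw [max_eq_right h1.le] at hz2
  rw [min_eq_left h3.le] at hz3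
  rw [max_eq_right h3.le] at hz4
  rw [mem_Anu_stair]
  exact ⟨le_trans hp.1 hz1, le_trans (le_trans hz2 h2) hz3, le_trans hz4 hq.2.2⟩

lemma nuCompatible_iff_ncr (n : ℕ) (p q : ℤ × ℤ) (hp : p ∈ Delta 0 n) (hq : q ∈ Delta 0 n) :
    NuCompatible (List.flatten (List.replicate n [true, false])) p q ↔ ncr p q := by
  constructor
  · intro h
    constructor
    · intro hc; exact h (incompat_of_cross n p q hp hq hc)
    · intro hc
      exact h (nuIncompatible_symm (incompat_of_cross n q p hq hp hc))
  · intro h hinc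
    rcases cross_of_incompat n p q hinc with hc | hc
    · exact h.1 hc
    · exact h.2 hc

/-- `IsNuTree` is equivalent to the clean combinatorial statement `MaxCompat 0 n`. -/
lemma isNuTree_iff_maxCompat (n : ℕ) (T : Set (ℤ × ℤ)) :
    IsNuTree (List.flatten (List.replicate n [true, false])) T ↔ MaxCompat 0 n T := by
  constructor
  · rintro ⟨hsub, hpair, hmax⟩
    have hsub' : T ⊆ Delta 0 n := fun p hp => (mem_Anu_stair n p).1 (hsub hp)
    refine ⟨hsub', fun p hp q hq => (nuCompatible_iff_ncr n p q (hsub' hp) (hsub' hq)).1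
      (hpair p hp q hq), ?_⟩
    intro p hp hcomp
    have key : insert p T = T := by
      apply hmax
      · exact Set.subset_insert _ _
      · intro z hz
        rcases hz with rfl | hz
        · exact (mem_Anu_stair n z).2 hp
        · exact hsub hz
      · have compat_p : ∀ y ∈ insert p T,
            NuCompatible (List.flatten (List.replicate n [true, false])) p y := by
          intro y hy
          rcases Set.mem_insert_iff.1 hy with hy | hy
          · rw [hy]; exact nuCompatible_self _ _
          · exact (nuCompatible_iff_ncr n p y hp (hsub' hy)).2 (hcomp y hy)
        intro x hx y hy
        rcases Set.mem_insert_iff.1 hx with hx | hx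
        · rw [hx]; exact compat_p y hy
        · rcases Set.mem_insert_iff.1 hy with hy | hy
          · rw [hy]
            exact nuCompatible_symm (compat_p x (Set.mem_insert_iff.2 (Or.inr hx)))
          · exact hpair x hx y hy
    rw [← key]; exact Set.mem_insert _ _
  · rintro ⟨hsub, hpair, hmax⟩
    refine ⟨fun p hp => (mem_Anu_stair n p).2 (hsub hp),
      fun p hp q hq => (nuCompatible_iff_ncr n p q (hsub hp) (hsub hq)).2 (hpair p hp q hq), ?_⟩
    intro T' hTT' hT'sub hT'pair
    apply Set.Subset.antisymm _ hTT'
    intro p hp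
    have hpD : p ∈ Delta 0 n := (mem_Anu_stair n p).1 (hT'sub hp)
    apply hmax p hpD
    intro q hq
    exact (nuCompatible_iff_ncr n p q hpD (hsub hq)).1 (hT'pair p hp q (hTT' hq))


/-- The set of lattice points associated to a binary tree placed at offset `a`. -/
def nodeSet : BinaryTree Unit → ℤ → Set (ℤ × ℤ)
  | BinaryTree.nil, a => {(a, a)}
  | BinaryTree.node _ l r, a =>
      insert (a, a + ((l.numNodes + r.numNodes + 1 : ℕ) : ℤ))
        (nodeSet l a ∪ nodeSet r (a + (l.numNodes : ℤ) + 1))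

lemma root_mem (t : BinaryTree Unit) (a : ℤ) : (a, a + (t.numNodes : ℤ)) ∈ nodeSet t a := by
  cases t with
  | nil => simp [nodeSet, BinaryTree.numNodes]
  | node u l r => exact Set.mem_insert _ _

lemma nodeSet_bounds {t : BinaryTree Unit} {a : ℤ} {p : ℤ × ℤ} (h : p ∈ nodeSet t a) :
    a ≤ p.1 ∧ p.1 ≤ p.2 ∧ p.2 ≤ a + (t.numNodes : ℤ) := by
  induction t generalizing a with
  | nil => simp only [nodeSet, Set.mem_singleton_iff] at h; subst h; simp [BinaryTree.numNodes]
  | node u l r ihl ihr =>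
    rcases Set.mem_insert_iff.1 h with rfl | h
    · simp only [BinaryTree.numNodes]; push_cast; omega
    · rcases h with h | h
      · have := ihl h; simp only [BinaryTree.numNodes]; push_cast; push_cast at this; omega
      · have := ihr h; simp only [BinaryTree.numNodes]; push_cast; push_cast at this; omega

lemma nodeSet_subset_delta (t : BinaryTree Unit) (a : ℤ) :
    nodeSet t a ⊆ Delta a (a + (t.numNodes : ℤ)) :=
  fun _ h => nodeSet_bounds h

lemma ncr_of_disjoint {p q : ℤ × ℤ} (h : p.2 < q.1 ∨ q.2 < p.1)
    (hp : p.1 ≤ p.2) (hq : q.1 ≤ q.2) : ncr p q := by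
  unfold ncr cross; omega

lemma ncr_of_nested {p q : ℤ × ℤ} (h : p.1 ≤ q.1 ∧ q.2 ≤ p.2) : ncr p q := by
  unfold ncr cross; omega

lemma ncr_symm {p q : ℤ × ℤ} (h : ncr p q) : ncr q p := ⟨h.2, h.1⟩

lemma nodeSet_pairwise (t : BinaryTree Unit) (a : ℤ) :
    ∀ p ∈ nodeSet t a, ∀ q ∈ nodeSet t a, ncr p q := by
  induction t generalizing a with
  | nil =>
    intro p hp q hq
    simp only [nodeSet, Set.mem_singleton_iff] at hp hq
    subst hp; subst hq; unfold ncr cross; omega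
  | node u l r ihl ihr =>
    -- root contains everything
    have hroot : ∀ q ∈ nodeSet (BinaryTree.node u l r) a, ncr (a, a + ((BinaryTree.node u l r).numNodes : ℤ)) q := by
      intro q hq
      have hb := nodeSet_bounds hq
      exact ncr_of_nested ⟨hb.1, hb.2.2⟩
    intro p hp q hq
    rcases Set.mem_insert_iff.1 hp with rfl | hp'
    · exact hroot q hq
    rcases Set.mem_insert_iff.1 hq with rfl | hq'
    · exact ncr_symm (hroot p hp)
    rcases hp' with hp' | hp' <;> rcases hq' with hq' | hq'
    · exact ihl a p hp' q hq'
    · have h1 := nodeSet_bounds hp'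
      have h2 := nodeSet_bounds hq'
      exact ncr_of_disjoint (Or.inl (by omega)) h1.2.1 h2.2.1
    · have h1 := nodeSet_bounds hp'
      have h2 := nodeSet_bounds hq'
      exact ncr_of_disjoint (Or.inr (by omega)) h1.2.1 h2.2.1
    · exact ihr _ p hp' q hq'

lemma nodeSet_maximal (t : BinaryTree Unit) (a : ℤ) :
    ∀ p ∈ Delta a (a + (t.numNodes : ℤ)), (∀ q ∈ nodeSet t a, ncr p q) → p ∈ nodeSet t a := by
  induction t generalizing a with
  | nil =>
    intro p hp _
    obtain ⟨h1, h2, h3⟩ := hp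
    simp only [BinaryTree.numNodes, Nat.cast_zero, add_zero] at h3
    have : p = (a, a) := by ext <;> simp <;> omega
    simp [nodeSet, this]
  | node u l r ihl ihr =>
    intro p hp hcomp
    set m : ℤ := a + (l.numNodes : ℤ) with hm
    have hLroot : (a, m) ∈ nodeSet (BinaryTree.node u l r) a :=
      Set.mem_insert_iff.2 (Or.inr (Or.inl (root_mem l a)))
    have hRroot : (a + (l.numNodes : ℤ) + 1, a + (l.numNodes : ℤ) + 1 + (r.numNodes : ℤ))
        ∈ nodeSet (BinaryTree.node u l r) a :=
      Set.mem_insert_iff.2 (Or.inr (Or.inr (root_mem r _)))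
    obtain ⟨h1, h2, h3⟩ := hp
    simp only [BinaryTree.numNodes] at h3
    push_cast at h3
    have hC1 := hcomp _ hLroot
    have hC2 := hcomp _ hRroot
    unfold ncr cross at hC1 hC2
    simp only at hC1 hC2
    -- three cases
    by_cases hcase1 : p.2 ≤ m
    · -- p lies in the left triangle
      have : p ∈ nodeSet l a := by
        apply ihl a p ⟨h1, h2, hcase1⟩
        intro q hq
        exact hcomp q (Set.mem_insert_iff.2 (Or.inr (Or.inl hq)))
      exact Set.mem_insert_iff.2 (Or.inr (Or.inl this))
    by_cases hcase2 : m + 1 ≤ p.1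
    · have : p ∈ nodeSet r (a + (l.numNodes : ℤ)  + 1) := by
        apply ihr _ p ⟨by omega, h2, by push_cast; omega⟩
        intro q hq
        exact hcomp q (Set.mem_insert_iff.2 (Or.inr (Or.inr hq)))
      exact Set.mem_insert_iff.2 (Or.inr (Or.inr this))
    -- p straddles the split, so p must be the root
    have hb1 := nodeSet_bounds hLroot
    have : p = (a, a + ((l.numNodes + r.numNodes + 1 : ℕ) : ℤ)) := by
      have hx : p.1 = a := by omega
      have hy : p.2 = a + ((l.numNodes + r.numNodes + 1 : ℕ) : ℤ) := by push_cast; omega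
      exact Prod.ext hx hy
    rw [this]
    exact Set.mem_insert _ _


/-! ### Injectivity -/

lemma numNodes_eq_of_nodeSet_eq {t t' : BinaryTree Unit} {a : ℤ}
    (h : nodeSet t a = nodeSet t' a) : t.numNodes = t'.numNodes := by
  have h1 := nodeSet_bounds (h ▸ root_mem t a)
  have h2 := nodeSet_bounds (h.symm ▸ root_mem t' a)
  simp only at h1 h2
  omega

lemma nodeSet_inj : ∀ (t t' : BinaryTree Unit) (a : ℤ), nodeSet t a = nodeSet t' a → t = t' := by
  intro t
  induction t with
  | nil =>
    intro t' a h
    cases t' with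
    | nil => rfl
    | node u l r =>
      have := numNodes_eq_of_nodeSet_eq h
      simp [BinaryTree.numNodes] at this
  | node u l r ihl ihr =>
    intro t' a h
    cases t' with
    | nil =>
      have := numNodes_eq_of_nodeSet_eq h
      simp [BinaryTree.numNodes] at this
    | node u' l' r' =>
      cases u; cases u'
      have hnn := numNodes_eq_of_nodeSet_eq h
      -- characterize the left split point
      have key : ∀ (l₀ r₀ : BinaryTree Unit),
          {k : ℤ | ((a, k) : ℤ × ℤ) ∈ nodeSet (BinaryTree.node () l₀ r₀) a
            ∧ k < a + ((BinaryTree.node () l₀ r₀).numNodes : ℤ)}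
          = {k : ℤ | k ≤ a + (l₀.numNodes : ℤ) ∧
              ((a, k) : ℤ × ℤ) ∈ nodeSet (BinaryTree.node () l₀ r₀) a} := by
        intro l₀ r₀
        ext k
        simp only [Set.mem_setOf_eq]
        constructor
        · rintro ⟨hk, hlt⟩
          refine ⟨?_, hk⟩
          rcases Set.mem_insert_iff.1 hk with heq | hk'
          · exfalso
            have : k = a + ((BinaryTree.node () l₀ r₀).numNodes : ℤ) := congrArg Prod.snd heq
            omega
          rcases hk' with hk' | hk'
          · exact (nodeSet_bounds hk').2.2
          · have := (nodeSet_bounds hk').1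
            simp only at this
            omega
        · rintro ⟨hle, hk⟩
          refine ⟨hk, ?_⟩
          simp only [BinaryTree.numNodes]
          push_cast
          omega
      -- the maximum of that set is a + numNodes l
      have maxchar : ∀ (l₀ r₀ : BinaryTree Unit), IsGreatest
          {k : ℤ | ((a, k) : ℤ × ℤ) ∈ nodeSet (BinaryTree.node () l₀ r₀) a
            ∧ k < a + ((BinaryTree.node () l₀ r₀).numNodes : ℤ)} (a + (l₀.numNodes : ℤ)) := by
        intro l₀ r₀
        constructor
        · refine ⟨Set.mem_insert_iff.2 (Or.inr (Or.inl (root_mem l₀ a))), ?_⟩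
          simp only [BinaryTree.numNodes]; push_cast; omega
        · intro k hk
          rw [key l₀ r₀] at hk
          exact hk.1
      have hml : (l.numNodes : ℤ) = (l'.numNodes : ℤ) := by
        have g1 := maxchar l r
        have g2 := maxchar l' r'
        rw [h, show ((BinaryTree.node () l r).numNodes) = ((BinaryTree.node () l' r').numNodes) from hnn] at g1
        have := g1.unique g2
        omega
      have hml' : l.numNodes = l'.numNodes := by exact_mod_cast hml
      -- recover the left and right node sets
      have hsplit : ∀ (l₀ r₀ : BinaryTree Unit),
          nodeSet l₀ a = {p ∈ nodeSet (BinaryTree.node () l₀ r₀) a | p.2 ≤ a + (l₀.numNodes : ℤ)} := by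
        intro l₀ r₀
        ext p
        simp only [Set.mem_setOf_eq]
        constructor
        · intro hp
          exact ⟨Set.mem_insert_iff.2 (Or.inr (Or.inl hp)), (nodeSet_bounds hp).2.2⟩
        · rintro ⟨hp, hle⟩
          rcases Set.mem_insert_iff.1 hp with heq | hp'
          · exfalso
            have : p.2 = a + ((l₀.numNodes + r₀.numNodes + 1 : ℕ) : ℤ) := congrArg Prod.snd heq
            push_cast at this; omega
          rcases hp' with hp' | hp'
          · exact hp'
          · exfalso
            have := (nodeSet_bounds hp').1
            have h2 := (nodeSet_bounds hp').2.1
            omega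
        -- analogous for right
      have hsplitr : ∀ (l₀ r₀ : BinaryTree Unit),
          nodeSet r₀ (a + (l₀.numNodes : ℤ) + 1)
            = {p ∈ nodeSet (BinaryTree.node () l₀ r₀) a | a + (l₀.numNodes : ℤ) + 1 ≤ p.1} := by
        intro l₀ r₀
        ext p
        simp only [Set.mem_setOf_eq]
        constructor
        · intro hp
          exact ⟨Set.mem_insert_iff.2 (Or.inr (Or.inr hp)), (nodeSet_bounds hp).1⟩
        · rintro ⟨hp, hle⟩
          rcases Set.mem_insert_iff.1 hp with heq | hp'
          · exfalso
            have : p.1 = a := congrArg Prod.fst heq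
            omega
          rcases hp' with hp' | hp'
          · exfalso
            have := (nodeSet_bounds hp').2.2
            have h2 := (nodeSet_bounds hp').2.1
            omega
          · exact hp'
      have heql : nodeSet l a = nodeSet l' a := by
        rw [hsplit l r, hsplit l' r', h, hml]
      have heqr : nodeSet r (a + (l.numNodes : ℤ) + 1) = nodeSet r' (a + (l'.numNodes : ℤ) + 1) := by
        rw [hsplitr l r, hsplitr l' r', h, hml]
      rw [ihl l' a heql, ihr r' _ (hml ▸ heqr)]

/-! ### Surjectivity -/

lemma diag_mem {a b : ℤ} {T : Set (ℤ × ℤ)} (h : MaxCompat a b T) {i : ℤ}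
    (h1 : a ≤ i) (h2 : i ≤ b) : (i, i) ∈ T := by
  apply h.2.2 (i, i) ⟨h1, le_refl i, h2⟩
  intro q hq
  have hb := h.1 hq
  unfold ncr cross
  simp only
  omega

lemma maxCompat_surj : ∀ (d : ℕ) (a : ℤ) (T : Set (ℤ × ℤ)), MaxCompat a (a + (d : ℤ)) T →
    ∃ t : BinaryTree Unit, t.numNodes = d ∧ nodeSet t a = T := by
  intro d
  induction d using Nat.strong_induction_on with
  | _ d ih =>
    intro a T hT
    obtain ⟨hsub, hpair, hmax⟩ := hT
    match d with
    | 0 =>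
      refine ⟨BinaryTree.nil, rfl, ?_⟩
      apply Set.Subset.antisymm
      · intro p hp
        simp only [nodeSet, Set.mem_singleton_iff] at hp
        subst hp
        exact diag_mem ⟨hsub, hpair, hmax⟩ (le_refl a) (by omega)
      · intro p hp
        have := hsub hp
        obtain ⟨h1, h2, h3⟩ := this
        simp only [Nat.cast_zero, add_zero] at h3
        have : p = (a, a) := Prod.ext (by omega) (by omega)
        simp [nodeSet, this]
    | (e+1) =>
      have hd : 0 < e + 1 := Nat.succ_pos e
      set b : ℤ := a + ((e+1 : ℕ) : ℤ) with hb
      -- the root is in T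
      have hrootT : (a, b) ∈ T := by
        apply hmax (a, b) ⟨le_refl a, by omega, le_refl b⟩
        intro q hq
        have hbq := hsub hq
        unfold ncr cross
        simp only
        obtain ⟨x1, x2, x3⟩ := hbq
        constructor <;> omega
      -- the split point m
      obtain ⟨m, ⟨hmT, hmlt⟩, hmmax⟩ :=
        Int.exists_greatest_of_bdd (P := fun k => ((a, k) : ℤ × ℤ) ∈ T ∧ k < b)
          ⟨b, fun z hz => hz.2.le⟩
          ⟨a, diag_mem ⟨hsub, hpair, hmax⟩ (le_refl a) (by omega), by omega⟩
      have hma : a ≤ m := ((hsub hmT).2.1 : a ≤ m)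
      have hmb : m ≤ b := (hsub hmT).2.2
      -- decomposition of T
      have hdecomp : ∀ p ∈ T, p = (a, b) ∨ p.2 ≤ m ∨ m + 1 ≤ p.1 := by
        intro p hp
        by_cases hc : p.1 ≤ m ∧ m < p.2
        · by_cases hpa : p.1 = a
          · left
            have : ¬ (p.2 < b) := by
              intro hlt
              have := hmmax p.2 ⟨by rw [← hpa]; exact hp, hlt⟩
              omega
            have hple := (hsub hp).2.2
            exact Prod.ext hpa (by omega)
          · exfalso
            have hcr := hpair _ hmT _ hp
            have h1 := (hsub hp).1
            exact hcr.1 ⟨by omega, hc.1, hc.2⟩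
        · right; omega
      set Tl : Set (ℤ × ℤ) := {p ∈ T | p.2 ≤ m} with hTl
      set Tr : Set (ℤ × ℤ) := {p ∈ T | m + 1 ≤ p.1} with hTr
      -- Tl is MaxCompat a m
      have hTlmc : MaxCompat a m Tl := by
        refine ⟨?_, ?_, ?_⟩
        · rintro p ⟨hp, hple⟩
          exact ⟨(hsub hp).1, (hsub hp).2.1, hple⟩
        · rintro p ⟨hp, -⟩ q ⟨hq, -⟩
          exact hpair p hp q hq
        · rintro p ⟨h1, h2, h3⟩ hcomp
          have hpT : p ∈ T := by
            apply hmax p ⟨h1, h2, by omega⟩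
            intro q hq
            rcases hdecomp q hq with rfl | hq2 | hq2
            · unfold ncr cross; simp only; omega
            · exact hcomp q ⟨hq, hq2⟩
            · have hbq := hsub hq
              unfold ncr cross
              obtain ⟨x1, x2, x3⟩ := hbq
              omega
          exact ⟨hpT, h3⟩
      -- Tr is MaxCompat (m+1) b
      have hTrmc : MaxCompat (m+1) b Tr := by
        refine ⟨?_, ?_, ?_⟩
        · rintro p ⟨hp, hple⟩
          exact ⟨hple, (hsub hp).2.1, (hsub hp).2.2⟩
        · rintro p ⟨hp, -⟩ q ⟨hq, -⟩
          exact hpair p hp q hq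
        · rintro p ⟨h1, h2, h3⟩ hcomp
          have hpT : p ∈ T := by
            apply hmax p ⟨by omega, h2, h3⟩
            intro q hq
            rcases hdecomp q hq with rfl | hq2 | hq2
            · unfold ncr cross; simp only; omega
            · have hbq := hsub hq
              unfold ncr cross
              obtain ⟨x1, x2, x3⟩ := hbq
              omega
            · exact hcomp q ⟨hq, hq2⟩
          exact ⟨hpT, h1⟩
      -- apply the induction hypothesis
      have hw1 : (m - a).toNat < e + 1 := by omega
      have hw2 : (b - m - 1).toNat < e + 1 := by omega
      have hml : m = a + ((m - a).toNat : ℤ) := by omega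
      have hmr : b = (m + 1) + ((b - m - 1).toNat : ℤ) := by omega
      obtain ⟨tl, htl1, htl2⟩ := ih _ hw1 a Tl (hml ▸ hTlmc)
      obtain ⟨tr, htr1, htr2⟩ := ih _ hw2 (m+1) Tr (hmr ▸ hTrmc)
      refine ⟨BinaryTree.node () tl tr, by simp [BinaryTree.numNodes, htl1, htr1]; omega, ?_⟩
      have hofs : a + (tl.numNodes : ℤ) + 1 = m + 1 := by rw [htl1]; omega
      have hroot : (a + ((tl.numNodes + tr.numNodes + 1 : ℕ) : ℤ)) = b := by
        rw [htl1, htr1]; push_cast; omega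
      apply Set.Subset.antisymm
      · intro p hp
        rcases Set.mem_insert_iff.1 hp with rfl | hp'
        · rw [hroot]; exact hrootT
        rcases hp' with hp' | hp'
        · rw [htl2] at hp'; exact hp'.1
        · rw [hofs, htr2] at hp'; exact hp'.1
      · intro p hp
        rcases hdecomp p hp with rfl | h2 | h2
        · rw [← hroot]; exact Set.mem_insert _ _
        · refine Set.mem_insert_iff.2 (Or.inr (Or.inl ?_))
          rw [htl2]; exact ⟨hp, h2⟩
        · refine Set.mem_insert_iff.2 (Or.inr (Or.inr ?_))
          rw [hofs, htr2]; exact ⟨hp, h2⟩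


lemma nodeSet_maxCompat (t : BinaryTree Unit) (a : ℤ) :
    MaxCompat a (a + (t.numNodes : ℤ)) (nodeSet t a) :=
  ⟨nodeSet_subset_delta t a, nodeSet_pairwise t a, nodeSet_maximal t a⟩

end NuStaircase

/-- for the staircase path `ν = (NE)^n`, the ν-trees are in bijection with
binary trees with `n` internal nodes; in particular their number is the `n`-th Catalan
number. -/
theorem nuTrees_staircase_catalan (n : ℕ) :
    Nonempty ({T : Set (ℤ × ℤ) // IsNuTree (List.flatten (List.replicate n [true, false])) T}
      ≃ {t : Tree Unit // t.numNodes = n}) ∧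
    Nat.card {T : Set (ℤ × ℤ) // IsNuTree (List.flatten (List.replicate n [true, false])) T}
      = catalan n := by
  open NuStaircase in
  have hmc : ∀ t : Tree Unit, t.numNodes = n →
      IsNuTree (List.flatten (List.replicate n [true, false])) (nodeSet t 0) := by
    intro t ht
    rw [isNuTree_iff_maxCompat]
    have := nodeSet_maxCompat t 0
    rwa [show BinaryTree.numNodes t = n from ht, zero_add] at this
  set φ : {t : Tree Unit // t.numNodes = n} →
      {T : Set (ℤ × ℤ) // IsNuTree (List.flatten (List.replicate n [true, false])) T} :=
    fun t => ⟨nodeSet t.1 0, hmc t.1 t.2⟩ with hφ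
  have hbij : Function.Bijective φ := by
    constructor
    · rintro ⟨t, ht⟩ ⟨t', ht'⟩ h
      simp only [hφ, Subtype.mk.injEq] at h ⊢
      exact nodeSet_inj t t' 0 h
    · rintro ⟨T, hT⟩
      rw [isNuTree_iff_maxCompat] at hT
      obtain ⟨t, ht1, ht2⟩ := maxCompat_surj n 0 T (by rwa [zero_add])
      exact ⟨⟨t, ht1⟩, Subtype.ext ht2⟩
  have e := (Equiv.ofBijective φ hbij).symm
  refine ⟨⟨e⟩, ?_⟩
  rw [Nat.card_congr e]
  have e2 : {t : Tree Unit // t.numNodes = n} ≃ {t : Tree Unit // t ∈ BinaryTree.treesOfNumNodesEq n} :=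
    Equiv.subtypeEquivRight (fun t => BinaryTree.mem_treesOfNumNodesEq.symm)
  rw [Nat.card_congr e2, Nat.card_eq_finsetCard, BinaryTree.treesOfNumNodesEq_card_eq_catalan]
end

section
/- Every node of a ν-tree other than the root has either a node strictly to its north in the same column or a node strictly to its west in the same row (within the tree), so the parent map connecting each non-root node to the nearest tree node to its north or west is well defined, and the resulting graph is a rooted tree. -/
open scoped Classical

/-- `q` is the nearest node of `T` strictly north of `p` in the same column, or the
nearest node of `T` strictly west of `p` in the same row. -/
def NorthOrWestNearest (T : Set (ℤ × ℤ)) (p q : ℤ × ℤ) : Prop :=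
  q ∈ T ∧
    ((q.1 = p.1 ∧ p.2 < q.2 ∧ ∀ q' ∈ T, q'.1 = p.1 → p.2 < q'.2 → q.2 ≤ q'.2) ∨
     (q.2 = p.2 ∧ q.1 < p.1 ∧ ∀ q' ∈ T, q'.2 = p.2 → q'.1 < p.1 → q'.1 ≤ q.1))

section Helpers

variable {ν : List Bool}

lemma ecount_mono {j k : ℕ} (h : j ≤ k) : ecount ν j ≤ ecount ν k := by
  unfold ecount
  rw [show ν.take j = (ν.take k).take j by rw [List.take_take, Nat.min_eq_left h]]
  exact (List.take_sublist _ _).count_le _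

lemma ncount_mono {j k : ℕ} (h : j ≤ k) : ncount ν j ≤ ncount ν k := by
  unfold ncount
  rw [show ν.take j = (ν.take k).take j by rw [List.take_take, Nat.min_eq_left h]]
  exact (List.take_sublist _ _).count_le _

lemma ecount_succ_le (k : ℕ) : ecount ν (k+1) ≤ ecount ν k + 1 := by
  unfold ecount
  rw [List.take_succ, List.count_append]
  have h1 : (ν[k]?.toList).count false ≤ (ν[k]?.toList).length := List.count_le_length
  have h2 : (ν[k]?.toList).length ≤ 1 := by cases h : ν[k]? <;> simp
  omega

lemma ecount_ivt {m n : ℕ} (h : m ≤ ecount ν n) : ∃ j ≤ n, ecount ν j = m := by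
  induction n with
  | zero => exact ⟨0, le_refl 0, by unfold ecount at h ⊢; simp at h ⊢; omega⟩
  | succ n ih =>
    by_cases hm : m ≤ ecount ν n
    · obtain ⟨j, hj, hje⟩ := ih hm
      exact ⟨j, hj.trans (Nat.le_succ n), hje⟩
    · have := ecount_succ_le (ν := ν) n
      exact ⟨n+1, le_refl _, by omega⟩

lemma Anu_bounds {p : ℤ × ℤ} (h : p ∈ Anu ν) :
    0 ≤ p.1 ∧ p.2 ≤ (ν.count true : ℤ) := by
  obtain ⟨k, hk, h1, h2, h3⟩ := h
  exact ⟨h1 ▸ Int.natCast_nonneg _, h3⟩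

lemma Anu_nw {p q : ℤ × ℤ} (h : p ∈ Anu ν) (h0 : 0 ≤ q.1)
    (h1 : q.1 ≤ p.1) (h2 : p.2 ≤ q.2) (h3 : q.2 ≤ (ν.count true : ℤ)) : q ∈ Anu ν := by
  obtain ⟨k, hk, hx, hy1, hy2⟩ := h
  have ham : q.1.toNat ≤ ecount ν k := by omega
  obtain ⟨j, hjk, hje⟩ := ecount_ivt ham
  have hmn : ncount ν j ≤ ncount ν k := ncount_mono hjk
  exact ⟨j, hjk.trans hk, by omega, by omega, h3⟩

lemma root_mem_Anu : ((0:ℤ), (ν.count true : ℤ)) ∈ Anu ν :=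
  ⟨0, Nat.zero_le _, by simp [ecount, ncount]⟩

lemma mem_rect_self₂ {p q : ℤ × ℤ} : q ∈ rectPts p q :=
  ⟨min_le_right _ _, le_max_right _ _, min_le_right _ _, le_max_right _ _⟩

lemma corner_mem_rect {p q : ℤ × ℤ} : ((q.1, p.2) : ℤ × ℤ) ∈ rectPts p q :=
  ⟨min_le_right _ _, le_max_right _ _, min_le_left _ _, le_max_left _ _⟩

lemma corner_mem_rect' {p q : ℤ × ℤ} : ((p.1, q.2) : ℤ × ℤ) ∈ rectPts p q :=
  ⟨min_le_left _ _, le_max_left _ _, min_le_right _ _, le_max_right _ _⟩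

lemma rectPts_comm {p q : ℤ × ℤ} : rectPts p q = rectPts q p := by
  ext z; simp [rectPts, min_comm, max_comm]

lemma incompat_symm {p q : ℤ × ℤ} (h : NuIncompatible ν p q) :
    NuIncompatible ν q p := ⟨h.1.symm, by rw [rectPts_comm]; exact h.2⟩

lemma incompat_of_corner {r s : ℤ × ℤ} (hr : r ∈ Anu ν) (hs : s ∈ Anu ν)
    (h1 : r.1 < s.1) (h2 : r.2 < s.2) (hc : ((s.1, r.2) : ℤ × ℤ) ∈ Anu ν) :
    NuIncompatible ν r s := by
  refine ⟨Or.inl ⟨h1, h2⟩, ?_⟩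
  rintro z ⟨z1, z2, z3, z4⟩
  have hb1 := Anu_bounds hr
  have hb2 := Anu_bounds hs
  rw [min_eq_left h1.le] at z1
  rw [max_eq_right h1.le] at z2
  rw [min_eq_left h2.le] at z3
  rw [max_eq_right h2.le] at z4
  exact Anu_nw hc (by omega) (by simpa using z2) (by simpa using z3) (by omega)

end Helpers

/-- in a ν-tree every non-root node has a node strictly to its north in the
same column or strictly to its west in the same row; the parent map (nearest such node)
is well defined, and the resulting graph is a tree rooted at the top-left corner
`(0, #N-steps)` of `F_ν` (every node reaches the root by iterating the parent map). -/
theorem nuTree_parent_rooted_tree (ν : List Bool) (T : Set (ℤ × ℤ))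
    (hT : IsNuTree ν T) :
    ((0 : ℤ), (ν.count true : ℤ)) ∈ T ∧
    (∀ p ∈ T, p ≠ ((0 : ℤ), (ν.count true : ℤ)) →
      (∃ q ∈ T, q.1 = p.1 ∧ p.2 < q.2) ∨ (∃ q ∈ T, q.2 = p.2 ∧ q.1 < p.1)) ∧
    (∀ p ∈ T, p ≠ ((0 : ℤ), (ν.count true : ℤ)) → ∃! q, NorthOrWestNearest T p q) ∧
    ∃ par : ℤ × ℤ → ℤ × ℤ,
      (∀ p ∈ T, p ≠ ((0 : ℤ), (ν.count true : ℤ)) → NorthOrWestNearest T p (par p)) ∧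
      ∀ p ∈ T, ∃ k : ℕ, par^[k] p = ((0 : ℤ), (ν.count true : ℤ)) := by
  obtain ⟨hTA, hcompat, hmax⟩ := hT
  -- the root is compatible with everything
  have root_compat : ∀ x, NuCompatible ν ((0:ℤ), (ν.count true : ℤ)) x := by
    rintro x ⟨hsw, hrect⟩
    have hx : x ∈ Anu ν := hrect mem_rect_self₂
    have hb := Anu_bounds hx
    rcases hsw with ⟨-, h⟩ | ⟨h, -⟩
    · exact absurd h (not_lt.2 hb.2)
    · exact absurd h (not_lt.2 hb.1)
  -- root membership
  have hroot : ((0:ℤ), (ν.count true : ℤ)) ∈ T := by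
    have hpair : ∀ a ∈ insert ((0:ℤ), (ν.count true : ℤ)) T,
        ∀ b ∈ insert ((0:ℤ), (ν.count true : ℤ)) T, NuCompatible ν a b := by
      intro a ha b hb
      rcases Set.mem_insert_iff.1 ha with rfl | ha' <;>
        rcases Set.mem_insert_iff.1 hb with rfl | hb'
      · exact root_compat _
      · exact root_compat _
      · exact fun h => root_compat a (incompat_symm h)
      · exact hcompat a ha' b hb'
    have heq := hmax _ (Set.subset_insert _ _)
      (Set.insert_subset_iff.2 ⟨root_mem_Anu, hTA⟩) hpair
    rw [← heq]
    exact Set.mem_insert _ _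
  -- maximality: any point of A_ν not in T is incompatible with some node
  have hfind : ∀ c ∈ Anu ν, c ∉ T → ∃ s ∈ T, NuIncompatible ν s c := by
    intro c hcA hcT
    by_contra hcon
    push_neg at hcon
    apply hcT
    have hpair : ∀ a ∈ insert c T, ∀ b ∈ insert c T, NuCompatible ν a b := by
      intro a ha b hb
      rcases Set.mem_insert_iff.1 ha with rfl | ha' <;>
        rcases Set.mem_insert_iff.1 hb with rfl | hb'
      · rintro ⟨(⟨h', -⟩ | ⟨h', -⟩), -⟩ <;> exact lt_irrefl _ h'
      · exact fun h => hcon b hb' (incompat_symm h)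
      · exact hcon a ha'
      · exact hcompat a ha' b hb'
    have heq := hmax _ (Set.subset_insert _ _)
      (Set.insert_subset_iff.2 ⟨hcA, hTA⟩) hpair
    rw [← heq]
    exact Set.mem_insert _ _
  -- existence of a node to the north or west
  have key : ∀ p ∈ T, p ≠ ((0:ℤ), (ν.count true : ℤ)) →
      (∃ q ∈ T, q.1 = p.1 ∧ p.2 < q.2) ∨ (∃ q ∈ T, q.2 = p.2 ∧ q.1 < p.1) := by
    intro p hp hne
    by_contra hcon
    push_neg at hcon
    obtain ⟨hno_n, hno_w⟩ := hcon
    have hpA := hTA hp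
    have hpb := Anu_bounds hpA
    rcases eq_or_lt_of_le hpb.2 with hN2 | hN2
    · -- p is on the top row: the root is to its west, contradiction unless p is the root
      have h0 : p.1 ≤ ((0:ℤ), (ν.count true : ℤ)).1 := hno_w _ hroot hN2.symm
      exact hne (Prod.ext_iff.2 ⟨le_antisymm h0 hpb.1, hN2⟩)
    · -- p.2 < #N
      have hcNA : ((p.1, (ν.count true : ℤ)) : ℤ × ℤ) ∈ Anu ν :=
        Anu_nw hpA hpb.1 le_rfl hpb.2 le_rfl
      have hcNT : ((p.1, (ν.count true : ℤ)) : ℤ × ℤ) ∉ T :=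
        fun h => absurd (hno_n _ h rfl) (not_le.2 hN2)
      obtain ⟨r0, hr0T, hr0inc⟩ := hfind _ hcNA hcNT
      have hr0b := Anu_bounds (hTA hr0T)
      have hr0sw : r0.1 < p.1 := by
        rcases hr0inc.1 with h | h
        · exact h.1
        · exact absurd h.2 (not_lt.2 hr0b.2)
      have hr0c : ((p.1, r0.2) : ℤ × ℤ) ∈ Anu ν := hr0inc.2 corner_mem_rect
      -- any "candidate" has second coordinate above p.2
      have hgt : ∀ r ∈ T, r.1 < p.1 → ((p.1, r.2) : ℤ × ℤ) ∈ Anu ν → p.2 < r.2 := by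
        intro r hr h1 hc
        rcases lt_trichotomy r.2 p.2 with h | h | h
        · exact absurd (incompat_of_corner (hTA hr) hpA h1 h hc) (hcompat r hr p hp)
        · exact absurd (hno_w r hr h) (not_le.2 h1)
        · exact h
      -- choose a candidate with least second coordinate
      obtain ⟨b, ⟨r, hrT, hr1, hr2, hbA⟩, hleast⟩ :=
        Int.exists_least_of_bdd
          (P := fun b => ∃ r, r ∈ T ∧ r.1 < p.1 ∧ r.2 = b ∧ ((p.1, b) : ℤ × ℤ) ∈ Anu ν)
          ⟨p.2, fun z hz => by
            obtain ⟨r, hr, h1, h2, h3⟩ := hz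
            have := hgt r hr h1 (by rw [h2]; exact h3)
            omega⟩
          ⟨r0.2, r0, hr0T, hr0sw, rfl, hr0c⟩
      have hb_gt : p.2 < b := by
        have := hgt r hrT hr1 (by rw [hr2]; exact hbA)
        omega
      have hcT2 : ((p.1, b) : ℤ × ℤ) ∉ T := fun h => absurd (hno_n _ h rfl) (not_le.2 hb_gt)
      obtain ⟨s, hsT, hsinc⟩ := hfind _ hbA hcT2
      have hsA := hTA hsT
      rcases hsinc.1 with h | h
      · -- s strictly southwest of (p.1, b): s is a smaller candidate
        obtain ⟨h1, h2⟩ := h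
        have h1' : s.1 < p.1 := h1
        have h2' : s.2 < b := h2
        have hcorner : ((p.1, s.2) : ℤ × ℤ) ∈ Anu ν := hsinc.2 corner_mem_rect
        have : b ≤ s.2 := hleast s.2 ⟨s, hsT, h1', rfl, hcorner⟩
        omega
      · -- (p.1, b) strictly southwest of s: then r and s are incompatible
        obtain ⟨h1, h2⟩ := h
        have h1' : p.1 < s.1 := h1
        have h2' : b < s.2 := h2
        have hcorner : ((s.1, b) : ℤ × ℤ) ∈ Anu ν := hsinc.2 corner_mem_rect'
        exact absurd
          (incompat_of_corner (hTA hrT) hsA (lt_trans hr1 h1') (by omega)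
            (by rw [hr2]; exact hcorner))
          (hcompat r hrT s hsT)
  -- a node cannot have both a north neighbour and a west neighbour
  have hexcl : ∀ p ∈ T, ∀ q₁ ∈ T, ∀ q₂ ∈ T,
      q₁.1 = p.1 → p.2 < q₁.2 → q₂.2 = p.2 → q₂.1 < p.1 → False := by
    intro p hp q1 hq1 q2 hq2 e1 l1 e2 l2
    apply hcompat q2 hq2 q1 hq1
    apply incompat_of_corner (hTA hq2) (hTA hq1) (by omega) (by omega)
    rw [e1, e2]
    exact hTA hp
  -- unique nearest north-or-west node
  have huniq : ∀ p ∈ T, p ≠ ((0:ℤ), (ν.count true : ℤ)) →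
      ∃! q, NorthOrWestNearest T p q := by
    intro p hp hne
    rcases key p hp hne with ⟨q, hqT, hq1, hq2⟩ | ⟨q, hqT, hq2, hq1⟩
    · obtain ⟨b, ⟨w, hwT, hw1, hw2, hwgt⟩, hleast⟩ :=
        Int.exists_least_of_bdd
          (P := fun b => ∃ w, w ∈ T ∧ w.1 = p.1 ∧ w.2 = b ∧ p.2 < b)
          ⟨p.2, fun z hz => by obtain ⟨w, -, -, -, h⟩ := hz; exact h.le⟩
          ⟨q.2, q, hqT, hq1, rfl, hq2⟩
      refine ⟨w, ⟨hwT, Or.inl ⟨hw1, by omega, fun q' hq' he hl => ?_⟩⟩, ?_⟩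
      · have := hleast q'.2 ⟨q', hq', he, rfl, hl⟩
        omega
      · rintro y ⟨hyT, ⟨e, l, m⟩ | hy⟩
        · have h1 : y.2 ≤ w.2 := m w hwT hw1 (by omega)
          have h2 : b ≤ y.2 := hleast y.2 ⟨y, hyT, e, rfl, l⟩
          exact Prod.ext_iff.2 ⟨by omega, by omega⟩
        · exact (hexcl p hp q hqT y hyT hq1 hq2 hy.1 hy.2.1).elim
    · obtain ⟨b, ⟨w, hwT, hw2, hw1, hwlt⟩, hgreat⟩ :=
        Int.exists_greatest_of_bdd
          (P := fun b => ∃ w, w ∈ T ∧ w.2 = p.2 ∧ w.1 = b ∧ b < p.1)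
          ⟨p.1, fun z hz => by obtain ⟨w, -, -, -, h⟩ := hz; exact h.le⟩
          ⟨q.1, q, hqT, hq2, rfl, hq1⟩
      refine ⟨w, ⟨hwT, Or.inr ⟨hw2, by omega, fun q' hq' he hl => ?_⟩⟩, ?_⟩
      · have := hgreat q'.1 ⟨q', hq', he, rfl, hl⟩
        omega
      · rintro y ⟨hyT, hy | ⟨e, l, m⟩⟩
        · exact (hexcl p hp y hyT q hqT hy.1 hy.2.1 hq2 hq1).elim
        · have h1 : w.1 ≤ y.1 := m w hwT hw2 (by omega)
          have h2 : y.1 ≤ b := hgreat y.1 ⟨y, hyT, e, rfl, l⟩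
          exact Prod.ext_iff.2 ⟨by omega, by omega⟩
  -- the parent map
  refine ⟨hroot, key, huniq, ?_⟩
  obtain ⟨par, hpar⟩ : ∃ par : ℤ × ℤ → ℤ × ℤ,
      ∀ p ∈ T, p ≠ ((0:ℤ), (ν.count true : ℤ)) → NorthOrWestNearest T p (par p) := by
    refine ⟨fun p => if h : p ∈ T ∧ p ≠ ((0:ℤ), (ν.count true : ℤ)) then
      (huniq p h.1 h.2).choose else ((0:ℤ), (ν.count true : ℤ)), fun p hp hne => ?_⟩
    beta_reduce
    rw [dif_pos (⟨hp, hne⟩ : p ∈ T ∧ p ≠ ((0:ℤ), (ν.count true : ℤ)))]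
    exact (huniq p hp hne).choose_spec.1
  have hNb : ∀ p ∈ T, 0 ≤ p.1 ∧ p.2 ≤ (ν.count true : ℤ) := fun p hp => Anu_bounds (hTA hp)
  have reach : ∀ n : ℕ, ∀ p ∈ T, (p.1 + ((ν.count true : ℤ) - p.2)).toNat ≤ n →
      ∃ k : ℕ, par^[k] p = ((0:ℤ), (ν.count true : ℤ)) := by
    intro n
    induction n with
    | zero =>
      intro p hp hm
      have hb := hNb p hp
      have hpe : p = ((0:ℤ), (ν.count true : ℤ)) := Prod.ext_iff.2 ⟨by omega, by omega⟩
      exact ⟨0, by simpa using hpe⟩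
    | succ n ih =>
      intro p hp hm
      by_cases hne : p = ((0:ℤ), (ν.count true : ℤ))
      · exact ⟨0, by simpa using hne⟩
      · obtain ⟨hqT, hcase⟩ := hpar p hp hne
        have hbq := hNb _ hqT
        have hbp := hNb p hp
        have hmq : ((par p).1 + ((ν.count true : ℤ) - (par p).2)).toNat ≤ n := by
          rcases hcase with ⟨e, l, -⟩ | ⟨e, l, -⟩ <;> omega
        obtain ⟨k, hk⟩ := ih (par p) hqT hmq
        exact ⟨k + 1, by rw [Function.iterate_succ_apply]; exact hk⟩
  exact ⟨par, hpar, fun p hp => reach _ p hp le_rfl⟩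
end

section
/- Under a flip in a subword complex of type A exchanging position j₀ in facet J₀ for position j₀' in facet J₁ = J₀ ∖ {j₀} ∪ {j₀'}, the root function transforms as: r(J₁, j) = s_β(r(J₀, j)) if min(j₀, j₀') < j ≤ max(j₀, j₀'), and r(J₁, j) = r(J₀, j) otherwise, where β = r(J₀, j₀) and s_β is the reflection along β. -/
open scoped Classical

/-- The simple transposition `s_{p+1} = (p+1, p+2)` of `S_{n+1}` acting on `Fin (n+1)`
(0-indexed: swapping `p` and `p+1`). -/
def simpleS (n : ℕ) (q : Fin n) : Equiv.Perm (Fin (n + 1)) :=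
  Equiv.swap q.castSucc q.succ

/-- The Coxeter length of a permutation of type `A_n`: its number of inversions. -/
def invCount {N : ℕ} (w : Equiv.Perm (Fin N)) : ℕ :=
  (Finset.univ.filter fun pq : Fin N × Fin N => pq.1 < pq.2 ∧ w pq.2 < w pq.1).card

/-- The subword `Q_{[m]∖I}` of `Q`, as a list of simple transpositions, read in
increasing order of positions. -/
def compWord {n m : ℕ} (Q : Fin m → Fin n) (I : Finset (Fin m)) :
    List (Equiv.Perm (Fin (n + 1))) :=
  ((List.finRange m).filter fun a => decide (a ∉ I)).map fun a => simpleS n (Q a)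

/-- `I` is a facet of the subword complex `SC(Q,w)`: the complement `Q_{[m]∖I}` is a
reduced expression for `w`. -/
def IsFacet {n m : ℕ} (Q : Fin m → Fin n) (w : Equiv.Perm (Fin (n + 1)))
    (I : Finset (Fin m)) : Prop :=
  (compWord Q I).prod = w ∧ (compWord Q I).length = invCount w

/-- The prefix product `∏ Q_{{1,…,k-1}∖I}`. -/
def prefixPerm {n m : ℕ} (Q : Fin m → Fin n) (I : Finset (Fin m)) (k : Fin m) :
    Equiv.Perm (Fin (n + 1)) :=
  (((List.finRange m).filter fun a => decide (a < k ∧ a ∉ I)).map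
    fun a => simpleS n (Q a)).prod

/-- The root function `r(I,k) := (∏ Q_{{1,…,k-1}∖I})(α_{q_k})`, where
`α_p = e_p - e_{p+1}` and permutations act on `ℝ^{n+1}` by permuting coordinates. -/
def rootFn {n m : ℕ} (Q : Fin m → Fin n) (I : Finset (Fin m)) (k : Fin m) :
    Fin (n + 1) → ℝ :=
  fun i => ((Pi.single (Fin.castSucc (Q k)) (1 : ℝ) : Fin (n + 1) → ℝ) -
      (Pi.single (Fin.succ (Q k)) (1 : ℝ) : Fin (n + 1) → ℝ))
    ((prefixPerm Q I k)⁻¹ i)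

open Matrix

/-- The reflection along the root `β`. -/
noncomputable def reflAlong {N : ℕ} (β : Fin N → ℝ) (x : Fin N → ℝ) : Fin N → ℝ :=
  x - (2 * (x ⬝ᵥ β) / (β ⬝ᵥ β)) • β

/-! ### Auxiliary list lemmas -/

lemma SW.filter_split {α} (l : List α) (r p : α → Bool)
    (h : l.Pairwise fun a b => r b = true → r a = true) :
    l.filter p = l.filter (fun a => p a && r a) ++ l.filter (fun a => p a && !r a) := by
  induction l with
  | nil => simp
  | cons a l ih =>
    rw [List.pairwise_cons] at h
    by_cases hr : r a = true
    · cases hp : p a <;> simp [List.filter_cons, hr, hp, ih h.2]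
    · have hr' : r a = false := by simpa using hr
      have hall : ∀ b ∈ l, r b = false := fun b hb => by
        by_contra hc
        exact hr (h.1 b hb (by simpa using hc))
      have h2 : (a :: l).filter (fun a => p a && !r a) = (a :: l).filter p := by
        apply List.filter_congr
        intro b hb
        rcases List.mem_cons.1 hb with rfl | hb
        · simp [hr']
        · simp [hall b hb]
      have h1' : (a :: l).filter (fun x => p x && r x) = [] := by
        rw [List.filter_eq_nil_iff]
        intro b hb
        rcases List.mem_cons.1 hb with rfl | hb
        · simp [hr']
        · simp [hall b hb]
      rw [h1', h2, List.nil_append]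

lemma SW.filter_eq_single {m : ℕ} (t : Fin m) (p : Fin m → Bool) (hp : p t = true) :
    (List.finRange m).filter (fun a => p a && decide (a = t)) = [t] := by
  have h1 : (List.finRange m).filter (fun a => p a && decide (a = t))
      = (List.finRange m).filter (fun a => decide (a = t)) := by
    apply List.filter_congr
    intro b _
    by_cases hb : b = t
    · subst hb; simp [hp]
    · simp [hb]
  rw [h1]
  have h2 : (List.finRange m).filter (fun a => decide (a = t))
      = List.replicate ((List.finRange m).count t) t := List.filter_eq t
  rw [h2, List.count_eq_one_of_mem (List.nodup_finRange m) (List.mem_finRange t),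
    List.replicate_one]

lemma SW.filter_split_at {m : ℕ} (t : Fin m) (p : Fin m → Bool) :
    (List.finRange m).filter p
      = (List.finRange m).filter (fun a => p a && decide (a < t))
        ++ (if p t = true then [t] else [])
        ++ (List.finRange m).filter (fun a => p a && decide (t < a)) := by
  have step1 := SW.filter_split (List.finRange m) (fun a => decide (a < t)) p
    (by
      refine (List.pairwise_lt_finRange m).imp ?_
      intro a b hab hbt
      simp only [decide_eq_true_eq] at hbt ⊢
      exact hab.trans hbt)
  have e1 : (List.finRange m).filter (fun a => p a && !decide (a < t))
      = (List.finRange m).filter (fun a => p a && decide (t ≤ a)) := by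
    apply List.filter_congr; intro b _
    by_cases hb : b < t
    · simp [hb, not_le.2 hb]
    · simp [hb, le_of_not_gt hb]
  rw [e1] at step1
  have step2 := SW.filter_split (List.finRange m) (fun a => decide (a ≤ t))
    (fun a => p a && decide (t ≤ a))
    (by
      refine (List.pairwise_lt_finRange m).imp ?_
      intro a b hab hbt
      simp only [decide_eq_true_eq] at hbt ⊢
      exact hab.le.trans hbt)
  have e2 : (List.finRange m).filter (fun a => (p a && decide (t ≤ a)) && decide (a ≤ t))
      = (List.finRange m).filter (fun a => p a && decide (a = t)) := by
    apply List.filter_congr; intro b _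
    by_cases hb : b = t
    · subst hb; simp
    · have : ¬(t ≤ b ∧ b ≤ t) := fun ⟨h1, h2⟩ => hb (le_antisymm h2 h1)
      rcases not_and_or.1 this with h | h <;> simp [h, hb]
  have e3 : (List.finRange m).filter (fun a => (p a && decide (t ≤ a)) && !decide (a ≤ t))
      = (List.finRange m).filter (fun a => p a && decide (t < a)) := by
    apply List.filter_congr; intro b _
    by_cases hb : t < b
    · simp [hb, hb.le, not_le.2 hb, le_of_lt hb]
    · simp only [not_lt] at hb
      simp [hb, hb.not_gt]
  rw [e2, e3] at step2
  have e4 : (List.finRange m).filter (fun a => p a && decide (a = t))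
      = (if p t = true then [t] else []) := by
    by_cases hp : p t = true
    · rw [SW.filter_eq_single t p hp, if_pos hp]
    · rw [if_neg hp, List.filter_eq_nil_iff]
      intro b hb
      by_cases hbt : b = t
      · subst hbt
        simp only [Bool.and_eq_true, decide_eq_true_eq]
        intro ⟨h, _⟩; exact hp h
      · simp [hbt]
  rw [e4] at step2
  rw [step1, step2, List.append_assoc]

/-! ### Products over filtered ranges -/

section ProdOver
variable {n m : ℕ} (Q : Fin m → Fin n)

def prodOver (p : Fin m → Bool) : Equiv.Perm (Fin (n + 1)) :=
  (((List.finRange m).filter p).map fun a => simpleS n (Q a)).prod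

lemma prodOver_congr {p q : Fin m → Bool} (h : ∀ a, p a = q a) :
    prodOver Q p = prodOver Q q := by
  have : p = q := funext h
  rw [this]

lemma prodOver_split (t : Fin m) (p : Fin m → Bool) :
    prodOver Q p = prodOver Q (fun a => p a && decide (a < t)) *
      (if p t = true then simpleS n (Q t) else 1) *
      prodOver Q (fun a => p a && decide (t < a)) := by
  unfold prodOver
  rw [SW.filter_split_at t p, List.map_append, List.map_append, List.prod_append,
    List.prod_append]
  congr 2
  by_cases hp : p t = true <;> simp [hp]

lemma prefixPerm_eq_prodOver (I : Finset (Fin m)) (k : Fin m) :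
    prefixPerm Q I k = prodOver Q (fun a => decide (a < k ∧ a ∉ I)) := rfl

lemma compWord_prod_eq_prodOver (I : Finset (Fin m)) :
    (compWord Q I).prod = prodOver Q (fun a => decide (a ∉ I)) := rfl

def midProd (I : Finset (Fin m)) (t k : Fin m) : Equiv.Perm (Fin (n + 1)) :=
  prodOver Q (fun a => decide (a < k ∧ a ∉ I) && decide (t < a))

def sufProd (I : Finset (Fin m)) (k : Fin m) : Equiv.Perm (Fin (n + 1)) :=
  prodOver Q (fun a => decide (a ∉ I) && decide (k < a))

lemma prefixPerm_split {I : Finset (Fin m)} {t k : Fin m} (ht : t < k) :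
    prefixPerm Q I k = prefixPerm Q I t *
      (if t ∉ I then simpleS n (Q t) else 1) * midProd Q I t k := by
  rw [prefixPerm_eq_prodOver, prodOver_split Q t]
  congr 2
  · rw [prefixPerm_eq_prodOver]
    apply prodOver_congr
    intro a
    by_cases ha : a < t
    · simp [ha, ha.trans ht]
    · simp [ha]
  · by_cases hI : t ∉ I <;> simp [hI, ht]

lemma compWord_split (I : Finset (Fin m)) (k : Fin m) :
    (compWord Q I).prod = prefixPerm Q I k *
      (if k ∉ I then simpleS n (Q k) else 1) * sufProd Q I k := by
  rw [compWord_prod_eq_prodOver, prodOver_split Q k]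
  congr 2
  · rw [prefixPerm_eq_prodOver]
    apply prodOver_congr
    intro a
    by_cases ha : a < k <;> simp [ha]
  · by_cases hI : k ∉ I <;> simp [hI]

end ProdOver

/-! ### rootFn and reflection lemmas -/

lemma SW.dot_single_sub {N : ℕ} (u v : Fin N) (x : Fin N → ℝ) :
    x ⬝ᵥ ((Pi.single u 1 - Pi.single v 1 : Fin N → ℝ)) = x u - x v := by
  simp [dotProduct, Pi.sub_apply, Pi.single_apply, mul_sub, mul_ite,
    Finset.sum_sub_distrib, Finset.sum_ite_eq']

lemma SW.reflAlong_single {N : ℕ} (u v : Fin N) (huv : u ≠ v) (x : Fin N → ℝ) :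
    reflAlong ((Pi.single u 1 - Pi.single v 1 : Fin N → ℝ)) x
      = fun i => x (Equiv.swap u v i) := by
  have h1 := SW.dot_single_sub u v x
  have h2 : ((Pi.single u (1:ℝ) - Pi.single v 1) : Fin N → ℝ) ⬝ᵥ
      ((Pi.single u 1 - Pi.single v 1) : Fin N → ℝ) = 2 := by
    rw [SW.dot_single_sub u v]
    simp [Pi.single_apply, huv, Ne.symm huv]
    ring
  unfold reflAlong
  rw [h1, h2]
  funext i
  rcases eq_or_ne i u with rfl | hiu
  · rw [Equiv.swap_apply_left]
    simp [Pi.single_apply, Ne.symm huv]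
    try ring
  · rcases eq_or_ne i v with rfl | hiv
    · rw [Equiv.swap_apply_right]
      simp [Pi.single_apply, huv, Ne.symm huv]
      try ring
    · rw [Equiv.swap_apply_of_ne_of_ne hiu hiv]
      simp [Pi.single_apply, hiu, hiv]

section RootFn
variable {n m : ℕ} (Q : Fin m → Fin n)

lemma rootFn_eq_single (I : Finset (Fin m)) (k : Fin m) :
    rootFn Q I k = (Pi.single (prefixPerm Q I k (Fin.castSucc (Q k))) 1 : Fin (n+1) → ℝ)
      - Pi.single (prefixPerm Q I k (Fin.succ (Q k))) 1 := by
  funext i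
  simp only [rootFn, Pi.sub_apply, Pi.single_apply]
  have h1 : ((prefixPerm Q I k)⁻¹ i = Fin.castSucc (Q k))
      ↔ (i = prefixPerm Q I k (Fin.castSucc (Q k))) := by
    constructor
    · intro h; rw [← h]; simp
    · intro h; rw [h]; simp
  have h2 : ((prefixPerm Q I k)⁻¹ i = Fin.succ (Q k))
      ↔ (i = prefixPerm Q I k (Fin.succ (Q k))) := by
    constructor
    · intro h; rw [← h]; simp
    · intro h; rw [h]; simp
  rw [if_congr h1 rfl rfl, if_congr h2 rfl rfl]

lemma rootFn_of_prefix_eq {I I' : Finset (Fin m)} {k : Fin m}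
    (h : prefixPerm Q I k = prefixPerm Q I' k) : rootFn Q I k = rootFn Q I' k := by
  funext i
  simp only [rootFn, h]

lemma rootFn_of_prefix_swap {I I' : Finset (Fin m)} {k : Fin m} {u v : Fin (n+1)}
    (h : prefixPerm Q I k = Equiv.swap u v * prefixPerm Q I' k) :
    rootFn Q I k = fun i => rootFn Q I' k (Equiv.swap u v i) := by
  funext i
  simp only [rootFn, h, _root_.mul_inv_rev, Equiv.swap_inv, Equiv.Perm.mul_apply]

end RootFn


/-- under the flip exchanging position `j₀` of the facet `J₀` for `j₀'`,
giving the facet `J₁ = J₀ ∖ {j₀} ∪ {j₀'}`, the root function transforms by the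
reflection `s_β` with `β = r(J₀, j₀)` on the positions strictly between the minimum
(exclusive) and maximum (inclusive) of `j₀, j₀'`, and is unchanged elsewhere. -/
theorem rootFn_flip {n m : ℕ} (Q : Fin m → Fin n) (w : Equiv.Perm (Fin (n + 1)))
    (J₀ J₁ : Finset (Fin m)) (hJ₀ : IsFacet Q w J₀) (hJ₁ : IsFacet Q w J₁)
    (j₀ j₀' : Fin m) (hj₀ : j₀ ∈ J₀) (hj₀' : j₀' ∉ J₀) (hne : j₀ ≠ j₀')
    (hflip : J₁ = insert j₀' (J₀.erase j₀)) :
    ∀ j : Fin m,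
      (min j₀ j₀' < j ∧ j ≤ max j₀ j₀' →
        rootFn Q J₁ j = reflAlong (rootFn Q J₀ j₀) (rootFn Q J₀ j)) ∧
      (¬(min j₀ j₀' < j ∧ j ≤ max j₀ j₀') → rootFn Q J₁ j = rootFn Q J₀ j) := by
  -- membership facts
  have hm : ∀ a : Fin m, a ≠ j₀ → a ≠ j₀' → ((a ∉ J₁) ↔ (a ∉ J₀)) := by
    intro a h1 h2
    simp [hflip, Finset.mem_insert, Finset.mem_erase, h1, h2]
  have hj₀J₁ : j₀ ∉ J₁ := by simp [hflip, Finset.mem_insert, Finset.mem_erase, hne]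
  have hj₀'J₁ : j₀' ∈ J₁ := by simp [hflip]
  -- prefix equality below both
  have hprefix_eq_low : ∀ j : Fin m, j ≤ j₀ → j ≤ j₀' →
      prefixPerm Q J₁ j = prefixPerm Q J₀ j := by
    intro j h1 h2
    rw [prefixPerm_eq_prodOver, prefixPerm_eq_prodOver]
    apply prodOver_congr
    intro a
    by_cases ha : a < j
    · have ha0 : a ≠ j₀ := (ha.trans_le h1).ne
      have ha1 : a ≠ j₀' := (ha.trans_le h2).ne
      exact decide_eq_decide.mpr (and_congr_right fun _ => hm a ha0 ha1)
    · simp [ha]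
  -- suffix equality above both
  have hsuf_eq : ∀ j : Fin m, j₀ ≤ j → j₀' ≤ j → sufProd Q J₁ j = sufProd Q J₀ j := by
    intro j h1 h2
    unfold sufProd
    apply prodOver_congr
    intro a
    by_cases ha : j < a
    · have ha0 : a ≠ j₀ := (h1.trans_lt ha).ne'
      have ha1 : a ≠ j₀' := (h2.trans_lt ha).ne'
      congr 1
      exact decide_eq_decide.mpr (hm a ha0 ha1)
    · simp [ha]
  -- prefix equality above both
  have hprefix_eq_high : ∀ j : Fin m, j₀ < j → j₀' < j →
      prefixPerm Q J₁ j = prefixPerm Q J₀ j := by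
    intro j h1 h2
    have h0 := compWord_split Q J₀ j
    have h1' := compWord_split Q J₁ j
    rw [hJ₀.1] at h0
    rw [hJ₁.1] at h1'
    rw [hsuf_eq j h1.le h2.le,
      if_congr (hm j h1.ne' h2.ne') rfl rfl] at h1'
    have key : prefixPerm Q J₁ j * (if j ∉ J₀ then simpleS n (Q j) else 1) * sufProd Q J₀ j
        = prefixPerm Q J₀ j * (if j ∉ J₀ then simpleS n (Q j) else 1) * sufProd Q J₀ j :=
      h1'.symm.trans h0
    exact mul_right_cancel (mul_right_cancel key)
  intro j
  constructor
  · rintro ⟨h1, h2⟩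
    rcases hne.lt_or_gt with hlt | hgt
    · -- case j₀ < j₀'
      rw [min_eq_left hlt.le] at h1
      rw [max_eq_right hlt.le] at h2
      set A := prefixPerm Q J₀ j₀ with hAdef
      have hA : prefixPerm Q J₁ j₀ = A := hprefix_eq_low j₀ le_rfl hlt.le
      have hmid : midProd Q J₁ j₀ j = midProd Q J₀ j₀ j := by
        unfold midProd
        apply prodOver_congr
        intro a
        by_cases hga : j₀ < a
        · by_cases haj : a < j
          · have e := hm a hga.ne' (haj.trans_le h2).ne
            congr 1
            exact decide_eq_decide.mpr (and_congr_right fun _ => e)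
          · simp [haj]
        · simp [hga]
      have hπ₁ : prefixPerm Q J₁ j = A * simpleS n (Q j₀) * midProd Q J₀ j₀ j := by
        rw [prefixPerm_split Q h1, if_pos hj₀J₁, hA, hmid]
      have hπ₀ : prefixPerm Q J₀ j = A * midProd Q J₀ j₀ j := by
        rw [prefixPerm_split Q h1, if_neg (not_not.mpr hj₀), mul_one]
      have huv : A (Fin.castSucc (Q j₀)) ≠ A (Fin.succ (Q j₀)) :=
        A.injective.ne (Fin.castSucc_lt_succ (i := Q j₀)).ne
      have hswap : prefixPerm Q J₁ j
          = Equiv.swap (A (Fin.castSucc (Q j₀))) (A (Fin.succ (Q j₀)))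
            * prefixPerm Q J₀ j := by
        rw [hπ₁, hπ₀, Equiv.swap_apply_apply]
        simp only [simpleS, mul_assoc, inv_mul_cancel_left]
      have hβ : rootFn Q J₀ j₀
          = (Pi.single (A (Fin.castSucc (Q j₀))) 1 : Fin (n+1) → ℝ)
            - Pi.single (A (Fin.succ (Q j₀))) 1 := rootFn_eq_single Q J₀ j₀
      rw [rootFn_of_prefix_swap Q hswap, hβ, SW.reflAlong_single _ _ huv]
    · -- case j₀' < j₀
      rw [min_eq_right hgt.le] at h1
      rw [max_eq_left hgt.le] at h2
      set A := prefixPerm Q J₀ j₀' with hAdef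
      have hA : prefixPerm Q J₁ j₀' = A := hprefix_eq_low j₀' hgt.le le_rfl
      have hmidB : ∀ k : Fin m, k ≤ j₀ → midProd Q J₁ j₀' k = midProd Q J₀ j₀' k := by
        intro k hk
        unfold midProd
        apply prodOver_congr
        intro a
        by_cases hga : j₀' < a
        · by_cases hak : a < k
          · have e := hm a (hak.trans_le hk).ne hga.ne'
            congr 1
            exact decide_eq_decide.mpr (and_congr_right fun _ => e)
          · simp [hak]
        · simp [hga]
      -- decompositions at j
      have hπ₀j : prefixPerm Q J₀ j = A * simpleS n (Q j₀') * midProd Q J₀ j₀' j := by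
        rw [prefixPerm_split Q h1, if_pos hj₀']
      have hπ₁j : prefixPerm Q J₁ j = A * midProd Q J₀ j₀' j := by
        rw [prefixPerm_split Q h1, if_neg (not_not.mpr hj₀'J₁), hA, hmidB j h2, mul_one]
      -- decomposition of the prefix at j₀
      have hP : prefixPerm Q J₀ j₀ = A * simpleS n (Q j₀') * midProd Q J₀ j₀' j₀ := by
        rw [prefixPerm_split Q hgt, if_pos hj₀']
      have hP1 : prefixPerm Q J₁ j₀ = A * midProd Q J₀ j₀' j₀ := by
        rw [prefixPerm_split Q hgt, if_neg (not_not.mpr hj₀'J₁), hA, hmidB j₀ le_rfl,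
          mul_one]
      -- the word equality gives the key commutation
      have h0 := compWord_split Q J₀ j₀
      have h1' := compWord_split Q J₁ j₀
      rw [hJ₀.1, if_neg (not_not.mpr hj₀), mul_one, hP] at h0
      rw [hJ₁.1, if_pos hj₀J₁, hsuf_eq j₀ le_rfl hgt.le, hP1] at h1'
      have key : simpleS n (Q j₀') * midProd Q J₀ j₀' j₀
          = midProd Q J₀ j₀' j₀ * simpleS n (Q j₀) := by
        have e : A * simpleS n (Q j₀') * midProd Q J₀ j₀' j₀ * sufProd Q J₀ j₀
            = A * midProd Q J₀ j₀' j₀ * simpleS n (Q j₀) * sufProd Q J₀ j₀ :=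
          h0.symm.trans h1'
        have e2 : A * (simpleS n (Q j₀') * midProd Q J₀ j₀' j₀)
            = A * (midProd Q J₀ j₀' j₀ * simpleS n (Q j₀)) := by
          have := mul_right_cancel e
          rw [mul_assoc, mul_assoc] at this
          exact this
        exact mul_left_cancel e2
      have hs' : simpleS n (Q j₀') * simpleS n (Q j₀') = 1 := Equiv.swap_mul_self _ _
      set C := midProd Q J₀ j₀' j₀ with hCdef
      set s' := simpleS n (Q j₀') with hs'def
      set s₀ := simpleS n (Q j₀) with hs₀def
      set P := prefixPerm Q J₀ j₀ with hPdef
      -- swap equality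
      have hL : P * s₀ = A * C := by
        rw [hP, mul_assoc (A * s') C s₀, ← key, ← mul_assoc (A * s') s' C,
          mul_assoc A s' s', hs', mul_one]
      have hR : A * s' * A⁻¹ * P = A * C := by
        rw [hP]
        simp only [mul_assoc, inv_mul_cancel_left]
        rw [← mul_assoc s' s' C, hs', one_mul]
      have hconj : P * s₀ * P⁻¹ = A * s' * A⁻¹ :=
        mul_inv_eq_iff_eq_mul.mpr (hL.trans hR.symm)
      have hswap2 : Equiv.swap (P (Fin.castSucc (Q j₀))) (P (Fin.succ (Q j₀)))
          = Equiv.swap (A (Fin.castSucc (Q j₀'))) (A (Fin.succ (Q j₀'))) := by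
        rw [Equiv.swap_apply_apply, Equiv.swap_apply_apply]
        have e1 : Equiv.swap (Fin.castSucc (Q j₀)) (Fin.succ (Q j₀)) = s₀ := rfl
        have e2 : Equiv.swap (Fin.castSucc (Q j₀')) (Fin.succ (Q j₀')) = s' := rfl
        rw [e1, e2, hconj]
      have hswapπ : prefixPerm Q J₁ j
          = Equiv.swap (A (Fin.castSucc (Q j₀'))) (A (Fin.succ (Q j₀')))
            * prefixPerm Q J₀ j := by
        rw [hπ₁j, hπ₀j, Equiv.swap_apply_apply]
        have e2 : Equiv.swap (Fin.castSucc (Q j₀')) (Fin.succ (Q j₀')) = s' := rfl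
        rw [e2]
        simp only [mul_assoc, inv_mul_cancel_left, Equiv.swap_mul_self_mul]
        rw [← mul_assoc s' s' (midProd Q J₀ j₀' j), hs', one_mul]
      have hPuv : P (Fin.castSucc (Q j₀)) ≠ P (Fin.succ (Q j₀)) :=
        P.injective.ne (Fin.castSucc_lt_succ (i := Q j₀)).ne
      have hβ : rootFn Q J₀ j₀
          = (Pi.single (P (Fin.castSucc (Q j₀))) 1 : Fin (n+1) → ℝ)
            - Pi.single (P (Fin.succ (Q j₀))) 1 := rootFn_eq_single Q J₀ j₀
      rw [rootFn_of_prefix_swap Q hswapπ, hβ, SW.reflAlong_single _ _ hPuv, hswap2]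
  · intro hj
    push_neg at hj
    by_cases hmin : min j₀ j₀' < j
    · have hmax := hj hmin
      have hj0 : j₀ < j := (le_max_left j₀ j₀').trans_lt hmax
      have hj0' : j₀' < j := (le_max_right j₀ j₀').trans_lt hmax
      exact rootFn_of_prefix_eq Q (hprefix_eq_high j hj0 hj0')
    · push_neg at hmin
      have hj0 : j ≤ j₀ := hmin.trans (min_le_left j₀ j₀')
      have hj0' : j ≤ j₀' := hmin.trans (min_le_right j₀ j₀')
      exact rootFn_of_prefix_eq Q (hprefix_eq_low j hj0 hj0')
end

section
/- For a ν-tree T, the cone C(T) = {x ∈ ℝ^{n+1} : ⟨x, β_t⟩ > 0 for all t ∈ T} is nonempty; equivalently, the contact graph of the pipe dream P(T) is acyclic. -/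
open scoped Classical

/-- In the pipe dream `P(T)`, the tile at cell `c` is an elbow iff `c` is a node of `T`
or `c` lies outside the Ferrers diagram `F_ν`; all other tiles are crossings. -/
def tileElbow (ν : List Bool) (T : Set (ℤ × ℤ)) (c : ℤ × ℤ) : Prop := c ∈ T ∨ c ∉ Anu ν

/-- One step of a pipe in the pipe dream `P(T)`.  A state `(c, d)` records the cell `c`
currently being traversed together with the heading `d` (`true` = east, `false` = north)
with which the pipe entered `c`.  An elbow turns the pipe, a crossing lets it through. -/
noncomputable def pstep (ν : List Bool) (T : Set (ℤ × ℤ)) :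
    (ℤ × ℤ) × Bool → (ℤ × ℤ) × Bool := fun s =>
  let d' : Bool := if tileElbow ν T s.1 then !s.2 else s.2
  (cond d' (s.1.1 + 1, s.1.2) (s.1.1, s.1.2 + 1), d')

/-- The trajectory of pipe `i` in `P(T)`: pipes are labeled (from `0`) from top to bottom
on the left edge, pipe `i` entering the leftmost column heading east at height
`(#north steps of ν) - i`. -/
noncomputable def ptraj (ν : List Bool) (T : Set (ℤ × ℤ)) (i : ℕ) (k : ℕ) :
    (ℤ × ℤ) × Bool :=
  (pstep ν T)^[k] (((0 : ℤ), (ν.count true : ℤ) - (i : ℤ)), true)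

/-- Pipe `i` passes above the lattice point `p` (with the Ferrers diagram shifted by
`-(ε,ε)`): the unique cell of the column of `p` that the pipe traverses heading east is
weakly above `p`. -/
def PipeAbove (ν : List Bool) (T : Set (ℤ × ℤ)) (i : ℕ) (p : ℤ × ℤ) : Prop :=
  ∃ k, (ptraj ν T i k).2 = true ∧ (ptraj ν T i k).1.1 = p.1 ∧ p.2 ≤ (ptraj ν T i k).1.2

/-- Pipe `i` passes (strictly) below the lattice point `p`. -/
def PipeBelow (ν : List Bool) (T : Set (ℤ × ℤ)) (i : ℕ) (p : ℤ × ℤ) : Prop :=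
  ∃ k, (ptraj ν T i k).2 = true ∧ (ptraj ν T i k).1.1 = p.1 ∧ (ptraj ν T i k).1.2 < p.2

/-- Pipe `i` enters the cell `c` heading east. -/
def EntersE (ν : List Bool) (T : Set (ℤ × ℤ)) (i : ℕ) (c : ℤ × ℤ) : Prop :=
  ∃ k, ptraj ν T i k = (c, true)

/-- Pipe `i` enters the cell `c` heading north. -/
def EntersN (ν : List Bool) (T : Set (ℤ × ℤ)) (i : ℕ) (c : ℤ × ℤ) : Prop :=
  ∃ k, ptraj ν T i k = (c, false)

/-- An ascent of a ν-tree `T`: a node having a node of `T` to its north and a node of `T`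
to its east. -/
def IsAscent (ν : List Bool) (T : Set (ℤ × ℤ)) (a : ℤ × ℤ) : Prop :=
  a ∈ T ∧ (∃ p ∈ T, p.1 = a.1 ∧ a.2 < p.2) ∧ (∃ r ∈ T, r.2 = a.2 ∧ a.1 < r.1)

open Matrix

namespace NuAux

variable (ν : List Bool) (T : Set (ℤ × ℤ))

/-! ### Basic trajectory lemmas -/

lemma ptraj_zero (i : ℕ) : ptraj ν T i 0 = (((0 : ℤ), (ν.count true : ℤ) - (i : ℤ)), true) :=
  rfl

lemma ptraj_succ (i k : ℕ) : ptraj ν T i (k + 1) = pstep ν T (ptraj ν T i k) :=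
  Function.iterate_succ_apply' _ _ _

lemma pstep_snd (s : (ℤ × ℤ) × Bool) :
    (pstep ν T s).2 = if tileElbow ν T s.1 then !s.2 else s.2 := rfl

lemma pstep_fst (s : (ℤ × ℤ) × Bool) :
    (pstep ν T s).1 = if (pstep ν T s).2 = true then (s.1.1 + 1, s.1.2) else (s.1.1, s.1.2 + 1) := by
  show (cond (if tileElbow ν T s.1 then !s.2 else s.2) (s.1.1 + 1, s.1.2) (s.1.1, s.1.2 + 1)) = _
  rcases h : (if tileElbow ν T s.1 then !s.2 else s.2) with _ | _ <;>
    simp [pstep_snd, h]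

lemma step_cell_true {i k : ℕ} (h : (ptraj ν T i (k+1)).2 = true) :
    (ptraj ν T i (k+1)).1 = ((ptraj ν T i k).1.1 + 1, (ptraj ν T i k).1.2) := by
  rw [ptraj_succ] at h ⊢
  rw [pstep_fst, if_pos h]

lemma step_cell_false {i k : ℕ} (h : (ptraj ν T i (k+1)).2 = false) :
    (ptraj ν T i (k+1)).1 = ((ptraj ν T i k).1.1, (ptraj ν T i k).1.2 + 1) := by
  rw [ptraj_succ] at h ⊢
  rw [pstep_fst, if_neg (by simp [h])]

lemma flip_elbow {i k : ℕ} (h : (ptraj ν T i (k+1)).2 ≠ (ptraj ν T i k).2) :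
    tileElbow ν T (ptraj ν T i k).1 := by
  by_contra hc
  rw [ptraj_succ, pstep_snd, if_neg hc] at h
  exact h rfl

lemma elbow_flip {i k : ℕ} (h : tileElbow ν T (ptraj ν T i k).1) :
    (ptraj ν T i (k+1)).2 = !(ptraj ν T i k).2 := by
  rw [ptraj_succ, pstep_snd, if_pos h]

lemma noflip_of_nelbow {i k : ℕ} (h : ¬ tileElbow ν T (ptraj ν T i k).1) :
    (ptraj ν T i (k+1)).2 = (ptraj ν T i k).2 := by
  rw [ptraj_succ, pstep_snd, if_neg h]

/-- sum of coordinates grows by one each step -/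
lemma sum_cell (i k : ℕ) :
    (ptraj ν T i k).1.1 + (ptraj ν T i k).1.2 = ((ν.count true : ℤ) - (i : ℤ)) + k := by
  induction k with
  | zero => simp [ptraj_zero]
  | succ k ih =>
      rcases h : (ptraj ν T i (k+1)).2 with _ | _
      · rw [step_cell_false ν T h]
        push_cast
        push_cast at ih
        omega
      · rw [step_cell_true ν T h]
        push_cast
        push_cast at ih
        omega

lemma x_succ_cases (i k : ℕ) :
    (ptraj ν T i (k+1)).1.1 = (ptraj ν T i k).1.1 ∨
      (ptraj ν T i (k+1)).1.1 = (ptraj ν T i k).1.1 + 1 := by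
  rcases h : (ptraj ν T i (k+1)).2 with _ | _
  · rw [step_cell_false ν T h]; left; rfl
  · rw [step_cell_true ν T h]; right; rfl

lemma x_mono (i : ℕ) {k k' : ℕ} (h : k ≤ k') :
    (ptraj ν T i k).1.1 ≤ (ptraj ν T i k').1.1 := by
  induction k' with
  | zero => simp_all
  | succ k' ih =>
      rcases Nat.lt_or_ge k (k'+1) with hk | hk
      · have := ih (by omega)
        rcases x_succ_cases ν T i k' with h1 | h1 <;> omega
      · have : k = k' + 1 := by omega
        simp [this]

lemma y_succ_cases (i k : ℕ) :
    (ptraj ν T i (k+1)).1.2 = (ptraj ν T i k).1.2 ∨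
      (ptraj ν T i (k+1)).1.2 = (ptraj ν T i k).1.2 + 1 := by
  rcases h : (ptraj ν T i (k+1)).2 with _ | _
  · rw [step_cell_false ν T h]; right; rfl
  · rw [step_cell_true ν T h]; left; rfl

lemma y_mono (i : ℕ) {k k' : ℕ} (h : k ≤ k') :
    (ptraj ν T i k).1.2 ≤ (ptraj ν T i k').1.2 := by
  induction k' with
  | zero => simp_all
  | succ k' ih =>
      rcases Nat.lt_or_ge k (k'+1) with hk | hk
      · have := ih (by omega)
        rcases y_succ_cases ν T i k' with h1 | h1 <;> omega
      · have : k = k' + 1 := by omega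
        simp [this]

lemma x_nonneg (i k : ℕ) : 0 ≤ (ptraj ν T i k).1.1 := by
  have := x_mono ν T i (Nat.zero_le k)
  simpa [ptraj_zero] using this

/-- heading true at a positive step forces x ≥ 1 -/
lemma x_pos_of_true {i k : ℕ} (hk : 0 < k) (h : (ptraj ν T i k).2 = true) :
    1 ≤ (ptraj ν T i k).1.1 := by
  obtain ⟨m, rfl⟩ : ∃ m, k = m + 1 := ⟨k - 1, by omega⟩
  rw [step_cell_true ν T h]
  have := x_nonneg ν T i m
  simpa using by omega

lemma pstep_inj : Function.Injective (pstep ν T) := by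
  intro a b h
  have h2 : (pstep ν T a).2 = (pstep ν T b).2 := by rw [h]
  have h1 : (pstep ν T a).1 = (pstep ν T b).1 := by rw [h]
  rw [pstep_fst, pstep_fst, h2] at h1
  have hcell : a.1 = b.1 := by
    rcases hd : (pstep ν T b).2 with _ | _ <;> rw [hd] at h1 <;> simp at h1 <;>
      · obtain ⟨hx, hy⟩ := h1
        exact Prod.ext (by omega) (by omega)
  have hsnd : a.2 = b.2 := by
    have ha := pstep_snd ν T a
    have hb := pstep_snd ν T b
    rw [hcell] at ha
    rw [ha, hb] at h2
    by_cases he : tileElbow ν T b.1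
    · rw [if_pos he, if_pos he] at h2
      exact Bool.not_inj h2
    · rw [if_neg he, if_neg he] at h2
      exact h2
  exact Prod.ext hcell hsnd

/-- distinct pipes never share a state -/
lemma no_shared : ∀ {k : ℕ} {i j k' : ℕ}, i ≠ j → ptraj ν T i k ≠ ptraj ν T j k' := by
  intro k
  induction k with
  | zero =>
      intro i j k' hij heq
      rcases Nat.eq_zero_or_pos k' with h0 | h0
      · subst h0
        rw [ptraj_zero, ptraj_zero] at heq
        have h3 : (ν.count true : ℤ) - (i:ℤ) = (ν.count true : ℤ) - (j:ℤ) :=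
          congrArg (fun s => s.1.2) heq
        exact hij (by omega)
      · have h2 : (ptraj ν T j k').2 = true := by rw [← heq]; rfl
        have h1 : (ptraj ν T j k').1.1 = 0 := by rw [← heq]; rfl
        have := x_pos_of_true ν T h0 h2
        omega
  | succ k ih =>
      intro i j k' hij heq
      rcases Nat.eq_zero_or_pos k' with h0 | h0
      · subst h0
        have h2 : (ptraj ν T i (k+1)).2 = true := by rw [heq]; rfl
        have h1 : (ptraj ν T i (k+1)).1.1 = 0 := by rw [heq]; rfl
        have := x_pos_of_true ν T (show 0 < k+1 by omega) h2
        omega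
      · obtain ⟨m, rfl⟩ : ∃ m, k' = m + 1 := ⟨k' - 1, by omega⟩
        rw [ptraj_succ, ptraj_succ] at heq
        exact ih hij (pstep_inj ν T heq)

/-- within a pipe, states determine the step -/
lemma step_inj {i k k' : ℕ} (h : ptraj ν T i k = ptraj ν T i k') : k = k' := by
  have h1 := sum_cell ν T i k
  have h2 := sum_cell ν T i k'
  rw [h] at h1
  omega

end NuAux
namespace NuAux

variable (ν : List Bool) (T : Set (ℤ × ℤ))

/-! ### Straight runs -/

/-- an east run: all headings true on `(a, b]` -/
lemma east_run {i a : ℕ} : ∀ {b : ℕ}, a ≤ b →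
    (∀ m, a < m → m ≤ b → (ptraj ν T i m).2 = true) →
    (ptraj ν T i b).1 = ((ptraj ν T i a).1.1 + ((b : ℤ) - (a : ℤ)), (ptraj ν T i a).1.2) := by
  intro b
  induction b with
  | zero =>
      intro hab _
      have : a = 0 := by omega
      subst this
      simp
  | succ b ih =>
      intro hab hm
      rcases Nat.lt_or_ge a (b+1) with h | h
      · have hb : a ≤ b := by omega
        have hcell := step_cell_true ν T (hm (b+1) (by omega) le_rfl)
        rw [hcell, ih hb (fun m h1 h2 => hm m h1 (by omega))]
        push_cast
        refine Prod.ext ?_ rfl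
        show _ = _
        push_cast
        ring
      · have : a = b + 1 := by omega
        subst this
        simp

/-- a north run: all headings false on `(a, b]` -/
lemma north_run {i a : ℕ} : ∀ {b : ℕ}, a ≤ b →
    (∀ m, a < m → m ≤ b → (ptraj ν T i m).2 = false) →
    (ptraj ν T i b).1 = ((ptraj ν T i a).1.1, (ptraj ν T i a).1.2 + ((b : ℤ) - (a : ℤ))) := by
  intro b
  induction b with
  | zero =>
      intro hab _
      have : a = 0 := by omega
      subst this
      simp
  | succ b ih =>
      intro hab hm
      rcases Nat.lt_or_ge a (b+1) with h | h
      · have hb : a ≤ b := by omega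
        have hcell := step_cell_false ν T (hm (b+1) (by omega) le_rfl)
        rw [hcell, ih hb (fun m h1 h2 => hm m h1 (by omega))]
        push_cast
        refine Prod.ext rfl ?_
        show _ = _
        push_cast
        ring
      · have : a = b + 1 := by omega
        subst this
        simp

/-! ### Structure of `Anu` -/

lemma ecount_mono {k k' : ℕ} (h : k ≤ k') : ecount ν k ≤ ecount ν k' := by
  unfold ecount
  have : ν.take k = (ν.take k').take k := by rw [List.take_take, min_eq_left h]
  rw [this]
  exact List.Sublist.count_le _ (List.take_sublist _ _)

lemma ncount_mono {k k' : ℕ} (h : k ≤ k') : ncount ν k ≤ ncount ν k' := by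
  unfold ncount
  have : ν.take k = (ν.take k').take k := by rw [List.take_take, min_eq_left h]
  rw [this]
  exact List.Sublist.count_le _ (List.take_sublist _ _)

lemma ecount_succ_le (k : ℕ) : ecount ν (k+1) ≤ ecount ν k + 1 := by
  unfold ecount
  rw [List.take_succ, List.count_append]
  rcases h : ν[k]? with _ | b
  · simp
  · rcases b <;> simp [List.count_cons]

lemma ecount_zero : ecount ν 0 = 0 := by simp [ecount]

/-- discrete IVT for ecount -/
lemma ecount_ivt {x : ℕ} : ∀ {k : ℕ}, x ≤ ecount ν k → ∃ k' ≤ k, ecount ν k' = x := by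
  intro k
  induction k with
  | zero =>
      intro h
      rw [ecount_zero] at h
      exact ⟨0, le_rfl, by rw [ecount_zero]; omega⟩
  | succ k ih =>
      intro h
      rcases Nat.lt_or_ge (ecount ν k) x with h1 | h1
      · have h2 := ecount_succ_le ν k
        exact ⟨k+1, le_rfl, by omega⟩
      · obtain ⟨k', hk', he⟩ := ih h1
        exact ⟨k', by omega, he⟩

lemma anu_bounds {p : ℤ × ℤ} (hp : p ∈ Anu ν) :
    0 ≤ p.1 ∧ 0 ≤ p.2 ∧ p.2 ≤ (ν.count true : ℤ) := by
  obtain ⟨k, hk, h1, h2, h3⟩ := hp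
  refine ⟨by rw [h1]; positivity, le_trans (by positivity) h2, h3⟩

/-- northwest closure of `Anu` -/
lemma anu_closure {p : ℤ × ℤ} (hp : p ∈ Anu ν) {x y : ℤ}
    (hx0 : 0 ≤ x) (hx : x ≤ p.1) (hy : p.2 ≤ y) (hyN : y ≤ (ν.count true : ℤ)) :
    (x, y) ∈ Anu ν := by
  obtain ⟨k, hk, h1, h2, h3⟩ := hp
  have hxk : x.toNat ≤ ecount ν k := by
    have : (x.toNat : ℤ) = x := Int.toNat_of_nonneg hx0
    omega
  obtain ⟨k', hk', he⟩ := ecount_ivt ν hxk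
  refine ⟨k', le_trans hk' hk, ?_, ?_, hyN⟩
  · show x = (ecount ν k' : ℤ)
    rw [he]
    omega
  · show (ncount ν k' : ℤ) ≤ y
    have := ncount_mono ν hk'
    omega

end NuAux
namespace NuAux

variable (ν : List Bool) (T : Set (ℤ × ℤ))

/-- C1: a pipe heading east into a cell of `Anu`, which has headed north before,
last turned east at an elbow of `T` in the same row, strictly west. -/
lemma east_turn_elbow {i k₀ k₁ : ℕ} {χ : ℤ × ℤ}
    (hcell : ptraj ν T i k₁ = (χ, true)) (hAnu : χ ∈ Anu ν)
    (h01 : k₀ < k₁) (h0 : (ptraj ν T i k₀).2 = false) :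
    ∃ v ∈ T, v.2 = χ.2 ∧ v.1 < χ.1 := by
  classical
  set P : ℕ → Prop := fun m => (ptraj ν T i m).2 = false with hP
  set k₂ := Nat.findGreatest P k₁ with hk₂
  have hPk₂ : P k₂ := Nat.findGreatest_spec (le_of_lt h01) h0
  have hk₂le : k₂ ≤ k₁ := Nat.findGreatest_le _
  have hk₂ne : k₂ ≠ k₁ := by
    intro h
    have hPk₁ : (ptraj ν T i k₁).2 = false := h ▸ hPk₂
    rw [hcell] at hPk₁
    simp at hPk₁
  have hk₂lt : k₂ < k₁ := lt_of_le_of_ne hk₂le hk₂ne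
  have hrun : ∀ m, k₂ < m → m ≤ k₁ → (ptraj ν T i m).2 = true := by
    intro m h1 h2
    have := Nat.findGreatest_is_greatest (show Nat.findGreatest P k₁ < m from h1) h2
    simpa [P] using this
  have hflip : (ptraj ν T i (k₂+1)).2 ≠ (ptraj ν T i k₂).2 := by
    rw [hrun (k₂+1) (by omega) (by omega), hPk₂]
    simp
  have helb : tileElbow ν T (ptraj ν T i k₂).1 := flip_elbow ν T hflip
  have hrunEq := east_run ν T (le_of_lt hk₂lt) hrun
  rw [hcell] at hrunEq
  set v := (ptraj ν T i k₂).1 with hv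
  have hx : χ.1 = v.1 + ((k₁ : ℤ) - (k₂ : ℤ)) := by
    have := congrArg Prod.fst hrunEq
    simpa using this
  have hy : χ.2 = v.2 := by
    have := congrArg Prod.snd hrunEq
    simpa using this
  have hvlt : v.1 < χ.1 := by
    have : (k₂ : ℤ) < (k₁ : ℤ) := by exact_mod_cast hk₂lt
    omega
  have hvAnu : v ∈ Anu ν := by
    have h0v : 0 ≤ v.1 := x_nonneg ν T i k₂
    have hb := anu_bounds ν hAnu
    have h5 : (v.1, χ.2) ∈ Anu ν := anu_closure ν hAnu h0v (le_of_lt hvlt) le_rfl hb.2.2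
    rw [hy] at h5
    simpa using h5
  rcases helb with hvT | hvnot
  · exact ⟨v, hvT, hy.symm, hvlt⟩
  · exact absurd hvAnu hvnot

/-- C2: a pipe heading north through a crossing, which visits a cell of `T` later,
next turns east at an elbow of `T` in the same column, strictly north. -/
lemma north_turn_elbow (hTsub : T ⊆ Anu ν) {i k₁ k₃ : ℕ} {χ : ℤ × ℤ}
    (hcell : ptraj ν T i k₁ = (χ, false)) (hnelb : ¬ tileElbow ν T χ)
    (h13 : k₁ < k₃) (h3T : (ptraj ν T i k₃).1 ∈ T) :
    ∃ u ∈ T, u.1 = χ.1 ∧ χ.2 < u.2 := by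
  classical
  have hAnu : χ ∈ Anu ν := by
    unfold tileElbow at hnelb
    push_neg at hnelb
    exact hnelb.2
  have hχT : χ ∉ T := by
    unfold tileElbow at hnelb
    push_neg at hnelb
    exact hnelb.1
  have hk1h : (ptraj ν T i k₁).2 = false := by rw [hcell]
  have hk1c : (ptraj ν T i k₁).1 = χ := by rw [hcell]
  -- heading at k₁ + 1 is still false
  have hk11 : (ptraj ν T i (k₁+1)).2 = false := by
    have := noflip_of_nelbow ν T (by rw [hk1c]; exact hnelb)
    rw [this, hk1h]
  by_cases hex : ∃ m, (k₁ < m ∧ (ptraj ν T i m).2 = true) ∧ m ≤ k₃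
  · -- there is a turn; take the first one
    set Q : ℕ → Prop := fun m => k₁ < m ∧ (ptraj ν T i m).2 = true with hQ
    have hexQ : ∃ m, Q m := by
      obtain ⟨m, hm, _⟩ := hex
      exact ⟨m, hm⟩
    set m' := Nat.find hexQ with hm'
    have hQm' : Q m' := Nat.find_spec hexQ
    have hmin : ∀ m, m < m' → ¬ Q m := fun m h => Nat.find_min hexQ h
    have hm'le : m' ≤ k₃ := by
      obtain ⟨m, hm, hmk⟩ := hex
      exact le_trans (Nat.find_min' hexQ hm) hmk
    have hm'2 : k₁ + 2 ≤ m' := by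
      rcases Nat.lt_or_ge m' (k₁ + 2) with h | h
      · exfalso
        have h1 : k₁ < m' := hQm'.1
        have : m' = k₁ + 1 := by omega
        rw [this] at hQm'
        rw [hQm'.2] at hk11
        simp at hk11
      · exact h
    have hrun : ∀ m, k₁ < m → m ≤ m' - 1 → (ptraj ν T i m).2 = false := by
      intro m h1 h2
      have := hmin m (by omega)
      simp only [Q, not_and] at this
      rcases hb : (ptraj ν T i m).2 with _ | _
      · rfl
      · exact absurd hb (this h1)
    have hrunEq := north_run ν T (show k₁ ≤ m' - 1 by omega) (fun m h1 h2 => hrun m h1 h2)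
    rw [hcell] at hrunEq
    set u := (ptraj ν T i (m' - 1)).1 with hu
    have hux : u.1 = χ.1 := by rw [hrunEq]
    have huy : u.2 = χ.2 + (((m' - 1 : ℕ) : ℤ) - (k₁ : ℤ)) := by rw [hrunEq]
    have huyg : χ.2 < u.2 := by
      have : (k₁ : ℤ) < ((m' - 1 : ℕ) : ℤ) := by exact_mod_cast (by omega : k₁ < m' - 1)
      omega
    -- the turn happens at m' - 1
    have hflip : (ptraj ν T i (m'-1+1)).2 ≠ (ptraj ν T i (m'-1)).2 := by
      have h1 : m' - 1 + 1 = m' := by omega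
      rw [h1, hQm'.2, hrun (m'-1) (by omega) le_rfl]
      simp
    have helb : tileElbow ν T u := flip_elbow ν T hflip
    rcases helb with huT | hunot
    · exact ⟨u, huT, hux, huyg⟩
    · -- u outside Anu: then u.2 > count true, contradiction with the later T-visit
      exfalso
      have hb := anu_bounds ν hAnu
      have huN : (ν.count true : ℤ) < u.2 := by
        by_contra hle
        push_neg at hle
        have : (u.1, u.2) ∈ Anu ν :=
          anu_closure ν hAnu (by rw [hux]; exact hb.1) (le_of_eq hux) (le_of_lt huyg) hle
        simpa using hunot this
      -- k₃ ≥ m' - 1 would give y k₃ ≥ u.2 > N, but cell k₃ ∈ T ⊆ Anu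
      have hk₃Anu := anu_bounds ν (hTsub h3T)
      rcases Nat.lt_or_ge k₃ (m' - 1) with hlt | hge
      · -- k₃ < m' - 1: the T-cell forces an earlier turn
        have hcT : tileElbow ν T (ptraj ν T i k₃).1 := Or.inl h3T
        have := elbow_flip ν T hcT
        rw [hrun k₃ h13 (by omega)] at this
        have hQk : Q (k₃ + 1) := ⟨by omega, by simp [this]⟩
        have := Nat.find_min' hexQ hQk
        omega
      · have h6 : u.2 ≤ (ptraj ν T i k₃).1.2 := y_mono ν T i hge
        omega
  · -- no turn up to k₃: straight north run to the T-cell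
    push_neg at hex
    have hrun : ∀ m, k₁ < m → m ≤ k₃ → (ptraj ν T i m).2 = false := by
      intro m h1 h2
      rcases hb : (ptraj ν T i m).2 with _ | _
      · rfl
      · exact absurd h2 (by simpa using hex m ⟨h1, hb⟩)
    have hrunEq := north_run ν T (le_of_lt h13) hrun
    rw [hcell] at hrunEq
    refine ⟨(ptraj ν T i k₃).1, h3T, ?_, ?_⟩
    · rw [hrunEq]
    · rw [hrunEq]
      have : (k₁ : ℤ) < (k₃ : ℤ) := by exact_mod_cast h13
      simp
      omega

/-- Lemma X : two T-active pipes cannot cross. -/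
lemma crossing_contra (hTsub : T ⊆ Anu ν)
    (hcompat : ∀ p ∈ T, ∀ q ∈ T, NuCompatible ν p q)
    {qE rN k₀ kE kN k₃ : ℕ} {χ : ℤ × ℤ}
    (hnelb : ¬ tileElbow ν T χ)
    (hE : ptraj ν T qE kE = (χ, true)) (h0E : k₀ < kE) (h0 : (ptraj ν T qE k₀).2 = false)
    (hN : ptraj ν T rN kN = (χ, false)) (h3N : kN < k₃) (h3T : (ptraj ν T rN k₃).1 ∈ T) :
    False := by
  have hAnu : χ ∈ Anu ν := by
    unfold tileElbow at hnelb
    push_neg at hnelb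
    exact hnelb.2
  obtain ⟨v, hvT, hvy, hvx⟩ := east_turn_elbow ν T hE hAnu h0E h0
  obtain ⟨u, huT, hux, huy⟩ := north_turn_elbow ν T hTsub hN hnelb h3N h3T
  have hb := anu_bounds ν hAnu
  have hvb := anu_bounds ν (hTsub hvT)
  have hub := anu_bounds ν (hTsub huT)
  refine hcompat v hvT u huT ⟨Or.inl ⟨by omega, by omega⟩, ?_⟩
  intro z hz
  obtain ⟨hz1, hz2, hz3, hz4⟩ := hz
  have h1 : min v.1 u.1 = v.1 := min_eq_left (by omega)
  have h2 : max v.1 u.1 = u.1 := max_eq_right (by omega)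
  have h3 : min v.2 u.2 = v.2 := min_eq_left (by omega)
  have h4 : max v.2 u.2 = u.2 := max_eq_right (by omega)
  rw [h1] at hz1
  rw [h2] at hz2
  rw [h3] at hz3
  rw [h4] at hz4
  have : (z.1, z.2) ∈ Anu ν := by
    refine anu_closure ν hAnu (by omega) (by omega) (by omega) (by omega)
  simpa using this

end NuAux
namespace NuAux

variable (ν : List Bool) (T : Set (ℤ × ℤ))

/-! ### Positions indexed by antidiagonal time -/

def alive (p : ℕ) (s : ℤ) : Prop := (ν.count true : ℤ) - (p : ℤ) ≤ s

noncomputable def pos (p : ℕ) (s : ℤ) : (ℤ × ℤ) × Bool :=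
  ptraj ν T p (s - ((ν.count true : ℤ) - (p : ℤ))).toNat

lemma alive_mono {p : ℕ} {s s' : ℤ} (h : alive ν p s) (hss : s ≤ s') : alive ν p s' :=
  le_trans h hss

lemma pos_sum {p : ℕ} {s : ℤ} (h : alive ν p s) :
    (pos ν T p s).1.1 + (pos ν T p s).1.2 = s := by
  unfold pos
  rw [sum_cell]
  unfold alive at h
  omega

lemma pos_succ {p : ℕ} {s : ℤ} (h : alive ν p s) :
    pos ν T p (s + 1) = pstep ν T (pos ν T p s) := by
  unfold pos
  rw [show (s + 1 - ((ν.count true : ℤ) - (p : ℤ))).toNat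
      = (s - ((ν.count true : ℤ) - (p : ℤ))).toNat + 1 by unfold alive at h; omega]
  exact ptraj_succ ν T p _

lemma pos_eq_ptraj {p k : ℕ} {s : ℤ} (hs : s = ((ν.count true : ℤ) - (p : ℤ)) + k) :
    pos ν T p s = ptraj ν T p k := by
  unfold pos
  congr 1
  omega

lemma alive_of_eq {p k : ℕ} {s : ℤ} (hs : s = ((ν.count true : ℤ) - (p : ℤ)) + k) :
    alive ν p s := by
  unfold alive
  omega

/-- distinct pipes at the same cell at the same time have different headings -/
lemma shared_heads {q r : ℕ} {s : ℤ} (hne : q ≠ r)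
    (hcell : (pos ν T q s).1 = (pos ν T r s).1) :
    (pos ν T q s).2 ≠ (pos ν T r s).2 := by
  intro h
  exact no_shared ν T hne (Prod.ext hcell h)

lemma same_cell {q r : ℕ} {s : ℤ} (hq : alive ν q s) (hr : alive ν r s)
    (hx : (pos ν T q s).1.1 = (pos ν T r s).1.1) :
    (pos ν T q s).1 = (pos ν T r s).1 := by
  have h1 := pos_sum ν T hq
  have h2 := pos_sum ν T hr
  exact Prod.ext hx (by omega)

/-! ### The order of pipes along an antidiagonal -/

def OrdQ (q r : ℕ) (s : ℤ) : Prop :=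
  (pos ν T q s).1.1 < (pos ν T r s).1.1 ∨
    ((pos ν T q s).1.1 = (pos ν T r s).1.1 ∧ (pos ν T q s).2 = true)

lemma ord_total {q r : ℕ} {s : ℤ} (hne : q ≠ r) (hq : alive ν q s) (hr : alive ν r s)
    (h : ¬ OrdQ ν T q r s) : OrdQ ν T r q s := by
  unfold OrdQ at h ⊢
  push_neg at h
  rcases lt_trichotomy ((pos ν T q s).1.1) ((pos ν T r s).1.1) with h1 | h1 | h1
  · exact absurd h1 (by omega)
  · have hcell := same_cell ν T hq hr h1
    have hh := shared_heads ν T hne hcell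
    have hq2 : (pos ν T q s).2 = false := by
      rcases hb : (pos ν T q s).2 with _ | _
      · rfl
      · exact absurd hb (by
          intro hb'
          exact absurd (h.2 h1) (by simp [hb']))
    right
    refine ⟨h1.symm, ?_⟩
    rcases hb : (pos ν T r s).2 with _ | _
    · rw [hb, hq2] at hh; simp at hh
    · rfl
  · left; exact h1

lemma ord_asymm {q r : ℕ} {s : ℤ} (hne : q ≠ r) (hq : alive ν q s) (hr : alive ν r s)
    (h1 : OrdQ ν T q r s) (h2 : OrdQ ν T r q s) : False := by
  unfold OrdQ at h1 h2
  rcases h1 with h1 | ⟨h1, h1'⟩ <;> rcases h2 with h2 | ⟨h2, h2'⟩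
  · omega
  · omega
  · omega
  · have hcell := same_cell ν T hq hr h1
    have hh := shared_heads ν T hne hcell
    rw [h1', h2'] at hh
    exact hh rfl

lemma ord_trans {q r z : ℕ} {s : ℤ} (hqr : q ≠ r) (hq : alive ν q s) (hr : alive ν r s)
    (h1 : OrdQ ν T q r s) (h2 : OrdQ ν T r z s) : OrdQ ν T q z s := by
  unfold OrdQ at h1 h2 ⊢
  rcases h1 with h1 | ⟨h1, h1'⟩
  · rcases h2 with h2 | ⟨h2, h2'⟩
    · left; omega
    · left; omega
  · have hh := shared_heads ν T hqr (same_cell ν T hq hr h1)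
    rcases h2 with h2 | ⟨h2, h2'⟩
    · left; omega
    · exfalso
      apply hh
      rw [h1', h2']

lemma pstep_x (s : (ℤ × ℤ) × Bool) :
    (pstep ν T s).1.1 = if (pstep ν T s).2 = true then s.1.1 + 1 else s.1.1 := by
  rw [pstep_fst]
  rcases h : (pstep ν T s).2 with _ | _ <;> simp

/-- if the order flips in one step, the two pipes share a crossing -/
lemma ord_step {q r : ℕ} {s : ℤ} (hne : q ≠ r) (hq : alive ν q s) (hr : alive ν r s)
    (h1 : OrdQ ν T q r s) (h2 : ¬ OrdQ ν T q r (s + 1)) :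
    (pos ν T q s).1 = (pos ν T r s).1 ∧ ¬ tileElbow ν T (pos ν T q s).1 := by
  have hq1 : alive ν q (s+1) := alive_mono ν hq (by omega)
  have hr1 : alive ν r (s+1) := alive_mono ν hr (by omega)
  have hsq := pos_succ ν T hq
  have hsr := pos_succ ν T hr
  have hxq := pstep_x ν T (pos ν T q s)
  have hxr := pstep_x ν T (pos ν T r s)
  rw [← hsq] at hxq
  rw [← hsr] at hxr
  rcases h1 with h1 | ⟨h1, h1'⟩
  · -- q strictly west of r: order cannot flip
    exfalso
    apply h2
    unfold OrdQ
    rcases hdq : (pos ν T q (s+1)).2 with _ | _ <;>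
      rcases hdr : (pos ν T r (s+1)).2 with _ | _ <;>
        rw [hdq] at hxq <;> rw [hdr] at hxr <;> simp at hxq hxr
    · left; omega
    · left; omega
    · -- q moved east, r moved north
      rcases lt_or_eq_of_le (show (pos ν T q (s+1)).1.1 ≤ (pos ν T r (s+1)).1.1 by omega)
        with h | h
      · left; exact h
      · right; exact ⟨h, rfl⟩
    · left; omega
  · -- shared cell
    have hcell := same_cell ν T hq hr h1
    by_cases helb : tileElbow ν T (pos ν T q s).1
    · exfalso
      apply h2
      unfold OrdQ
      have hdq : (pos ν T q (s+1)).2 = false := by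
        rw [hsq, pstep_snd, if_pos helb, h1']
        rfl
      have hdr : (pos ν T r (s+1)).2 = true := by
        have helb' : tileElbow ν T (pos ν T r s).1 := by rw [← hcell]; exact helb
        rw [hsr, pstep_snd, if_pos helb']
        have := shared_heads ν T hne hcell
        rcases hb : (pos ν T r s).2 with _ | _
        · rfl
        · rw [h1', hb] at this; simp at this
      rw [hdq] at hxq
      rw [hdr] at hxr
      simp at hxq hxr
      left
      omega
    · exact ⟨hcell, helb⟩

/-! ### T-activity windows -/

def TV (p : ℕ) (s : ℤ) : Prop := alive ν p s ∧ (pos ν T p s).1 ∈ T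

def Win (p : ℕ) (s : ℤ) : Prop :=
  (∃ s₀, s₀ ≤ s ∧ TV ν T p s₀) ∧ (∃ s₁, s ≤ s₁ ∧ TV ν T p s₁)

lemma win_alive {p : ℕ} {s : ℤ} (h : Win ν T p s) : alive ν p s := by
  obtain ⟨⟨s₀, hs₀, h₀⟩, _⟩ := h
  exact alive_mono ν h₀.1 hs₀

lemma win_between {p : ℕ} {s s' σ : ℤ} (h : Win ν T p s) (h' : Win ν T p s')
    (h1 : s ≤ σ) (h2 : σ ≤ s') : Win ν T p σ := by
  obtain ⟨⟨s₀, hs₀, h₀⟩, -⟩ := h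
  obtain ⟨-, ⟨s₁, hs₁, h₁⟩⟩ := h'
  exact ⟨⟨s₀, by omega, h₀⟩, ⟨s₁, by omega, h₁⟩⟩

/-- no two pipes may cross (one through the other) while both are T-active -/
lemma no_crossing (hTsub : T ⊆ Anu ν)
    (hcompat : ∀ p ∈ T, ∀ q ∈ T, NuCompatible ν p q)
    {q r : ℕ} {s : ℤ} (hne : q ≠ r) (hWq : Win ν T q s) (hWr : Win ν T r s)
    (hcell : (pos ν T q s).1 = (pos ν T r s).1)
    (hnelb : ¬ tileElbow ν T (pos ν T q s).1) : False := by
  -- identify the east-heading and north-heading pipe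
  have hq := win_alive ν T hWq
  have hr := win_alive ν T hWr
  have hh := shared_heads ν T hne hcell
  -- a symmetric core taking the east pipe and the north pipe
  have core : ∀ qE rN : ℕ, qE ≠ rN → alive ν qE s → alive ν rN s →
      (pos ν T qE s).2 = true → (pos ν T rN s).2 = false →
      (pos ν T qE s).1 = (pos ν T rN s).1 → ¬ tileElbow ν T (pos ν T qE s).1 →
      (∃ s₀, s₀ ≤ s ∧ TV ν T qE s₀) → (∃ s₁, s ≤ s₁ ∧ TV ν T rN s₁) → False := by
    intro qE rN hne' haE haN hdE hdN hc hnelb' hW0 hW1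
    have hχT : (pos ν T qE s).1 ∉ T := by
      intro hmem
      exact hnelb' (Or.inl hmem)
    obtain ⟨s₀, hs₀le, hTV₀⟩ := hW0
    obtain ⟨s₁, hs₁ge, hTV₁⟩ := hW1
    -- s₀ < s
    have hs₀lt : s₀ < s := by
      rcases lt_or_eq_of_le hs₀le with h | h
      · exact h
      · exact absurd (h ▸ hTV₀.2) hχT
    -- s₁ > s
    have hs₁gt : s < s₁ := by
      rcases lt_or_eq_of_le hs₁ge with h | h
      · exact h
      · refine absurd hTV₁.2 ?_
        rw [← h, ← hc]
        exact hχT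
    -- the east pipe headed north at some time < s
    have hnorth : ∃ s', s' < s ∧ alive ν qE s' ∧ (pos ν T qE s').2 = false := by
      have helb0 : tileElbow ν T (pos ν T qE s₀).1 := Or.inl hTV₀.2
      have hflip : (pos ν T qE (s₀+1)).2 = !(pos ν T qE s₀).2 := by
        rw [pos_succ ν T hTV₀.1, pstep_snd, if_pos helb0]
      rcases hd0 : (pos ν T qE s₀).2 with _ | _
      · exact ⟨s₀, hs₀lt, hTV₀.1, hd0⟩
      · rw [hd0] at hflip
        simp at hflip
        refine ⟨s₀ + 1, ?_, alive_mono ν hTV₀.1 (by omega), hflip⟩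
        rcases lt_or_eq_of_le (show s₀ + 1 ≤ s by omega) with h | h
        · exact h
        · rw [h] at hflip
          rw [hflip] at hdE
          simp at hdE
    obtain ⟨s', hs'lt, hs'al, hs'hd⟩ := hnorth
    -- convert everything to step indices and apply `crossing_contra`
    set hE : ℤ := (ν.count true : ℤ) - (qE : ℤ) with hhE
    set hN : ℤ := (ν.count true : ℤ) - (rN : ℤ) with hhN
    have hprE : pos ν T qE s = (((pos ν T qE s).1), true) := Prod.ext rfl hdE
    have hk0 : (s' - hE).toNat < (s - hE).toNat := by
      unfold alive at hs'al haE
      omega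
    have hk3 : (s - hN).toNat < (s₁ - hN).toNat := by
      unfold alive at haN
      omega
    refine crossing_contra ν T hTsub hcompat hnelb'
      (show ptraj ν T qE ((s - hE).toNat) = ((pos ν T qE s).1, true) from hprE)
      hk0
      (show (ptraj ν T qE ((s' - hE).toNat)).2 = false from hs'hd)
      (show ptraj ν T rN ((s - hN).toNat) = ((pos ν T qE s).1, false) from ?_)
      hk3
      (show (ptraj ν T rN ((s₁ - hN).toNat)).1 ∈ T from hTV₁.2)
    show pos ν T rN s = _
    exact Prod.ext hc.symm hdN
  rcases hdq : (pos ν T q s).2 with _ | _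
  · -- q heads north, r heads east
    have hdr : (pos ν T r s).2 = true := by
      rcases hb : (pos ν T r s).2 with _ | _
      · rw [hdq, hb] at hh; simp at hh
      · rfl
    exact core r q (Ne.symm hne) hr hq hdr hdq hcell.symm (by rw [← hcell]; exact hnelb)
      hWr.1 hWq.2
  · have hdr : (pos ν T r s).2 = false := by
      rcases hb : (pos ν T r s).2 with _ | _
      · rfl
      · rw [hdq, hb] at hh; simp at hh
    exact core q r hne hq hr hdq hdr hcell hnelb hWq.1 hWr.2

/-- propagation of the order upwards through a common activity window -/
lemma ord_const_up (hTsub : T ⊆ Anu ν)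
    (hcompat : ∀ p ∈ T, ∀ q ∈ T, NuCompatible ν p q)
    {q r : ℕ} {s s' : ℤ} (hne : q ≠ r) (hss : s ≤ s')
    (hWq : Win ν T q s) (hWq' : Win ν T q s') (hWr : Win ν T r s) (hWr' : Win ν T r s')
    (h : OrdQ ν T q r s) : OrdQ ν T q r s' := by
  have key : ∀ n : ℤ, s ≤ n → (n ≤ s' → OrdQ ν T q r n) := by
    refine Int.le_induction ?_ ?_
    · intro _; exact h
    · intro n hn ih hns'
      have hOn := ih (by omega)
      by_contra hc
      have hWqn : Win ν T q n := win_between ν T hWq hWq' hn (by omega)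
      have hWrn : Win ν T r n := win_between ν T hWr hWr' hn (by omega)
      obtain ⟨hcell, hnelb⟩ := ord_step ν T hne (win_alive ν T hWqn) (win_alive ν T hWrn) hOn hc
      exact no_crossing ν T hTsub hcompat hne hWqn hWrn hcell hnelb
  exact key s' hss le_rfl

end NuAux
namespace NuAux

variable (ν : List Bool) (T : Set (ℤ × ℤ))

/-! ### The relation `RR` between pipes -/

def RR (q r : ℕ) : Prop :=
  q ≠ r ∧ ∃ s, Win ν T q s ∧ Win ν T r s ∧ OrdQ ν T q r s

/-- the order between two pipes is determined throughout their common activity window -/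
lemma ord_win (hTsub : T ⊆ Anu ν)
    (hcompat : ∀ p ∈ T, ∀ q ∈ T, NuCompatible ν p q)
    {q r : ℕ} {s' : ℤ} (h : RR ν T q r) (hWq' : Win ν T q s') (hWr' : Win ν T r s') :
    OrdQ ν T q r s' := by
  obtain ⟨hne, s, hWq, hWr, hOrd⟩ := h
  rcases le_or_gt s s' with hss | hss
  · exact ord_const_up ν T hTsub hcompat hne hss hWq hWq' hWr hWr' hOrd
  · by_contra hc
    have h2 := ord_total ν T hne (win_alive ν T hWq') (win_alive ν T hWr') hc
    have h3 := ord_const_up ν T hTsub hcompat (Ne.symm hne) (le_of_lt hss) hWr' hWr hWq' hWq h2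
    exact ord_asymm ν T hne (win_alive ν T hWq) (win_alive ν T hWr) hOrd h3

lemma tv_nonneg (hTsub : T ⊆ Anu ν) {p : ℕ} {s : ℤ} (h : TV ν T p s) : 0 ≤ s := by
  have hb := anu_bounds ν (hTsub h.2)
  have hs := pos_sum ν T h.1
  omega

/-- no periodic cycle for `RR` -/
lemma no_periodic (hTsub : T ⊆ Anu ν)
    (hcompat : ∀ p ∈ T, ∀ q ∈ T, NuCompatible ν p q) :
    ∀ n : ℕ, 0 < n → ∀ c : ℕ → ℕ, (∀ i, c (i + n) = c i) →
      (∀ i, RR ν T (c i) (c (i + 1))) → False := by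
  intro n
  induction n using Nat.strong_induction_on with
  | _ n ih =>
    intro hn c hper hchain
    -- n = 1 is immediate
    rcases Nat.lt_or_ge n 2 with hn2 | hn2
    · have hn1 : n = 1 := by omega
      have h1 : c 1 = c 0 := by
        have := hper 0
        rw [hn1] at this
        simpa using this
      have := hchain 0
      rw [show (0:ℕ) + 1 = 1 from rfl, h1] at this
      exact this.1 rfl
    -- each pipe in the cycle is T-active somewhere
    have hTVex : ∀ i : ℕ, ∃ s, TV ν T (c i) s := by
      intro i
      obtain ⟨-, s, hW, -, -⟩ := hchain i
      obtain ⟨⟨s₀, -, hTV⟩, -⟩ := hW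
      exact ⟨s₀, hTV⟩
    -- choose the earliest T-activity time of the pipe at each position
    have hexB : ∀ i : ℕ, ∃ b, TV ν T (c i) b ∧ ∀ z, TV ν T (c i) z → b ≤ z := by
      intro i
      exact Int.exists_least_of_bdd ⟨0, fun z hz => tv_nonneg ν T hTsub hz⟩ (hTVex i)
    choose B hB1 hB2 using hexB
    have hBle : ∀ i i' : ℕ, c i = c i' → B i ≤ B i' := by
      intro i i' h
      exact hB2 i (B i') (h ▸ hB1 i')
    -- position with the latest birth
    obtain ⟨j, hjmem, hjmax⟩ :=
      Finset.exists_max_image (Finset.range n) (fun i => B i) ⟨0, Finset.mem_range.mpr hn⟩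
    have hjn : j < n := Finset.mem_range.mp hjmem
    set a : ℤ := B j with ha
    -- the cyclic predecessor of j and the successor
    set J : ℕ := j + n - 1 with hJ
    have hJ1 : c (J + 1) = c j := by
      have h1 : J + 1 = j + n := by omega
      rw [h1, hper j]
    have RRa : RR ν T (c J) (c j) := by
      have := hchain J
      rwa [hJ1] at this
    have RRb : RR ν T (c j) (c (j + 1)) := hchain j
    -- births of the neighbours are at most `a`
    have hmodc : ∀ i : ℕ, c i = c (i % n) := by
      have haux : ∀ m i : ℕ, c (i + n * m) = c i := by
        intro m
        induction m with
        | zero => intro i; simp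
        | succ m ihm =>
            intro i
            have h1 : i + n * (m + 1) = (i + n * m) + n := by ring
            rw [h1, hper, ihm]
      intro i
      conv_lhs => rw [← Nat.mod_add_div i n]
      exact haux (i / n) (i % n)
    have hbirth_le : ∀ i : ℕ, B (i % n) ≤ a := by
      intro i
      exact hjmax (i % n) (Finset.mem_range.mpr (Nat.mod_lt _ (by omega)))
    have hBposJ : B (J % n) ≤ a := hbirth_le J
    have hBposj1 : B ((j+1) % n) ≤ a := hbirth_le (j+1)
    have hTVJ : TV ν T (c J) (B (J % n)) := by
      rw [hmodc J]
      exact hB1 (J % n)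
    have hTVj1 : TV ν T (c (j+1)) (B ((j+1) % n)) := by
      rw [hmodc (j+1)]
      exact hB1 ((j+1) % n)
    have hTVj : TV ν T (c j) a := hB1 j
    -- activity windows at time `a`
    have Wcj : Win ν T (c j) a := ⟨⟨a, le_rfl, hTVj⟩, ⟨a, le_rfl, hTVj⟩⟩
    have Wqa : Win ν T (c J) a := by
      refine ⟨⟨B (J % n), hBposJ, hTVJ⟩, ?_⟩
      obtain ⟨-, s, hWJ, hWj, -⟩ := RRa
      obtain ⟨⟨s₀, hs₀, hTV₀⟩, -⟩ := hWj
      have h1 : a ≤ s₀ := hB2 j s₀ hTV₀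
      obtain ⟨-, ⟨s₁, hs₁, hTV₁⟩⟩ := hWJ
      exact ⟨s₁, by omega, hTV₁⟩
    have Wqb : Win ν T (c (j+1)) a := by
      refine ⟨⟨B ((j+1) % n), hBposj1, hTVj1⟩, ?_⟩
      obtain ⟨-, s, hWj, hWb, -⟩ := RRb
      obtain ⟨⟨s₀, hs₀, hTV₀⟩, -⟩ := hWj
      have h1 : a ≤ s₀ := hB2 j s₀ hTV₀
      obtain ⟨-, ⟨s₁, hs₁, hTV₁⟩⟩ := hWb
      exact ⟨s₁, by omega, hTV₁⟩
    -- order at time a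
    have O1 : OrdQ ν T (c J) (c j) a := ord_win ν T hTsub hcompat RRa Wqa Wcj
    have O2 : OrdQ ν T (c j) (c (j+1)) a := ord_win ν T hTsub hcompat RRb Wcj Wqb
    by_cases hceq : c J = c (j + 1)
    · rw [← hceq] at O2
      exact ord_asymm ν T RRa.1 (win_alive ν T Wqa) (win_alive ν T Wcj) O1 O2
    · have O3 : OrdQ ν T (c J) (c (j+1)) a :=
        ord_trans ν T RRa.1 (win_alive ν T Wqa) (win_alive ν T Wcj) O1 O2
      have RRnew : RR ν T (c J) (c (j+1)) := ⟨hceq, a, Wqa, Wqb, O3⟩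
      -- n = 2 would force c J = c (j+1)
      have hn3 : 3 ≤ n := by
        rcases Nat.lt_or_ge n 3 with h | h
        · exfalso
          apply hceq
          have : J = j + 1 := by omega
          rw [this]
        · exact h
      -- shorter cycle
      set n' : ℕ := n - 1 with hn'
      have hn'2 : 2 ≤ n' := by omega
      set c' : ℕ → ℕ := fun i => c (j + 1 + i % n') with hc'
      have hper' : ∀ i, c' (i + n') = c' i := by
        intro i
        simp only [c']
        rw [Nat.add_mod_right]
      have hchain' : ∀ i, RR ν T (c' i) (c' (i + 1)) := by
        intro i
        have hr : i % n' < n' := Nat.mod_lt _ (by omega)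
        have hmod1 : (i + 1) % n' = (i % n' + 1) % n' := by
          conv_lhs => rw [Nat.add_mod]
          congr 1
          congr 1
          exact Nat.mod_eq_of_lt (by omega)
        rcases Nat.lt_or_ge (i % n' + 1) n' with h1 | h1
        · have h2 : (i + 1) % n' = i % n' + 1 := by
            rw [hmod1, Nat.mod_eq_of_lt h1]
          simp only [c']
          rw [h2]
          have := hchain (j + 1 + i % n')
          rw [show j + 1 + i % n' + 1 = j + 1 + (i % n' + 1) by ring] at this
          exact this
        · have h2 : i % n' + 1 = n' := by omega
          have h3 : (i + 1) % n' = 0 := by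
            rw [hmod1, h2, Nat.mod_self]
          simp only [c']
          rw [h3]
          have h4 : j + 1 + i % n' = J := by omega
          rw [h4]
          simpa using RRnew
      exact ih n' (by omega) (by omega) c' hper' hchain'

end NuAux
namespace NuAux

variable (ν : List Bool) (T : Set (ℤ × ℤ))

/-- a contact arc gives the relation `RR` between its two pipes -/
lemma arc_to_RR {i j : ℕ} {t : ℤ × ℤ} (htT : t ∈ T)
    (hE : EntersE ν T i t) (hN : EntersN ν T j t) : RR ν T i j := by
  obtain ⟨k, hk⟩ := hE
  obtain ⟨k', hk'⟩ := hN
  set s : ℤ := t.1 + t.2 with hs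
  have hsum := sum_cell ν T i k
  rw [hk] at hsum
  have hsum' := sum_cell ν T j k'
  rw [hk'] at hsum'
  have hsi : s = ((ν.count true : ℤ) - (i : ℤ)) + k := by simp at hsum ⊢; omega
  have hsj : s = ((ν.count true : ℤ) - (j : ℤ)) + k' := by simp at hsum' ⊢; omega
  have hposi : pos ν T i s = (t, true) := by rw [pos_eq_ptraj ν T hsi, hk]
  have hposj : pos ν T j s = (t, false) := by rw [pos_eq_ptraj ν T hsj, hk']
  have hne : i ≠ j := by
    intro h
    subst h
    have : k = k' := by omega
    subst this
    rw [hk] at hk'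
    simp at hk'
  have hTVi : TV ν T i s := ⟨alive_of_eq ν hsi, by rw [hposi]; exact htT⟩
  have hTVj : TV ν T j s := ⟨alive_of_eq ν hsj, by rw [hposj]; exact htT⟩
  refine ⟨hne, s, ⟨⟨s, le_rfl, hTVi⟩, ⟨s, le_rfl, hTVi⟩⟩,
    ⟨⟨s, le_rfl, hTVj⟩, ⟨s, le_rfl, hTVj⟩⟩, ?_⟩
  right
  constructor
  · rw [hposi, hposj]
  · rw [hposi]

/-- extract a finite chain from `TransGen` -/
lemma tg_chain {α : Type*} {R : α → α → Prop} {a b : α} (h : Relation.TransGen R a b) :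
    ∃ n : ℕ, 0 < n ∧ ∃ cc : ℕ → α, cc 0 = a ∧ cc n = b ∧ ∀ i < n, R (cc i) (cc (i+1)) := by
  induction h with
  | @single y hr =>
      refine ⟨1, one_pos, fun i => if i = 0 then a else y, by simp, by simp, ?_⟩
      intro i hi
      have : i = 0 := by omega
      subst this
      simpa using hr
  | @tail y z hab hbc ihab =>
      obtain ⟨n, hn, cc, h0, hnb, hch⟩ := ihab
      refine ⟨n + 1, by omega, fun i => if i ≤ n then cc i else z, by simp [h0], by simp, ?_⟩
      intro i hi
      rcases Nat.lt_or_ge i n with h1 | h1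
      · show R (if i ≤ n then cc i else z) (if i + 1 ≤ n then cc (i+1) else z)
        rw [if_pos (by omega : i ≤ n), if_pos (by omega : i + 1 ≤ n)]
        exact hch i h1
      · have h2 : i = n := by omega
        show R (if i ≤ n then cc i else z) (if i + 1 ≤ n then cc (i+1) else z)
        rw [h2]
        rw [if_pos (le_refl n), if_neg (by omega : ¬ n + 1 ≤ n), hnb]
        exact hbc

/-- acyclicity of the contact graph -/
lemma contact_acyclic (hTsub : T ⊆ Anu ν)
    (hcompat : ∀ p ∈ T, ∀ q ∈ T, NuCompatible ν p q) {N : ℕ}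
    (A : Fin N → Fin N → Prop)
    (hA : ∀ a b, A a b → ∃ t ∈ T, EntersE ν T (a : ℕ) t ∧ EntersN ν T (b : ℕ) t)
    (a : Fin N) : ¬ Relation.TransGen A a a := by
  intro h
  obtain ⟨n, hn, cc, h0, hna, hch⟩ := tg_chain h
  set c : ℕ → ℕ := fun i => ((cc (i % n) : Fin N) : ℕ) with hc
  have hper : ∀ i, c (i + n) = c i := by
    intro i
    simp only [c, Nat.add_mod_right]
  have hchain : ∀ i, RR ν T (c i) (c (i + 1)) := by
    intro i
    have hr : i % n < n := Nat.mod_lt _ hn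
    have hmod1 : (i + 1) % n = (i % n + 1) % n := by
      conv_lhs => rw [Nat.add_mod]
      rw [Nat.add_mod_mod]
    rcases Nat.lt_or_ge (i % n + 1) n with h1 | h1
    · have h2 : (i + 1) % n = i % n + 1 := by rw [hmod1, Nat.mod_eq_of_lt h1]
      simp only [c]
      rw [h2]
      obtain ⟨t, htT, hE, hN⟩ := hA _ _ (hch (i % n) hr)
      exact arc_to_RR ν T htT hE hN
    · have h2 : i % n + 1 = n := by omega
      have h3 : (i + 1) % n = 0 := by rw [hmod1, h2, Nat.mod_self]
      simp only [c]
      rw [h3]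
      obtain ⟨t, htT, hE, hN⟩ := hA _ _ (hch (i % n) hr)
      have h4 : cc (i % n + 1) = cc 0 := by rw [h2, hna]; exact h0.symm
      rw [h4] at hN
      exact arc_to_RR ν T htT hE hN
  exact no_periodic ν T hTsub hcompat n hn c hper hchain

end NuAux

/-- for a ν-tree `T`, the cone
`C(T) = {x : ⟨x, β_t⟩ > 0 for all t ∈ T}` is nonempty (equivalently, the contact graph
of the pipe dream `P(T)` is acyclic), where `β_t = e_i - e_j` for the pipes `i`, `j`
meeting at the elbow of `P(T)` at `t`. -/
theorem cone_of_nuTree_nonempty (ν : List Bool) (T : Set (ℤ × ℤ))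
    (hT : IsNuTree ν T) (N : ℕ)
    (β : ℤ × ℤ → (Fin N → ℝ))
    (hβ : ∀ t ∈ T, ∃ i j : Fin N, EntersE ν T (i : ℕ) t ∧ EntersN ν T (j : ℕ) t ∧
      β t = Pi.single i (1 : ℝ) - Pi.single j 1) :
    ∃ x : Fin N → ℝ, ∀ t ∈ T, 0 < x ⬝ᵥ β t := by
  classical
  set A : Fin N → Fin N → Prop :=
    fun a b => ∃ t ∈ T, EntersE ν T (a : ℕ) t ∧ EntersN ν T (b : ℕ) t with hA
  have hacyc : ∀ a : Fin N, ¬ Relation.TransGen A a a :=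
    NuAux.contact_acyclic ν T hT.1 hT.2.1 A (fun a b h => h)
  set xv : Fin N → ℝ :=
    fun a => ((Finset.univ.filter (fun b => Relation.TransGen A a b)).card : ℝ) with hxv
  have hkey : ∀ a b : Fin N, A a b → xv b < xv a := by
    intro a b hab
    have hsub1 : (Finset.univ.filter (fun k => Relation.TransGen A b k)) ⊆
        (Finset.univ.filter (fun k => Relation.TransGen A a k)) := by
      intro k hk
      simp only [Finset.mem_filter, Finset.mem_univ, true_and] at hk ⊢
      exact Relation.TransGen.head hab hk
    have hmem1 : b ∈ Finset.univ.filter (fun k => Relation.TransGen A a k) := by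
      simp only [Finset.mem_filter, Finset.mem_univ, true_and]
      exact Relation.TransGen.single hab
    have hmem2 : b ∉ Finset.univ.filter (fun k => Relation.TransGen A b k) := by
      simp only [Finset.mem_filter, Finset.mem_univ, true_and]
      exact hacyc b
    have hcard := Finset.card_lt_card
      ((Finset.ssubset_iff_of_subset hsub1).mpr ⟨b, hmem1, hmem2⟩)
    simp only [hxv]
    exact_mod_cast hcard
  refine ⟨xv, ?_⟩
  intro t ht
  obtain ⟨i, j, hiE, hjN, hβt⟩ := hβ t ht
  have hAij : A i j := ⟨t, ht, hiE, hjN⟩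
  rw [hβt, dotProduct_sub, dotProduct_single, dotProduct_single, mul_one, mul_one]
  have := hkey i j hAij
  linarith
end
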